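/- arXiv:0802.3153 — 2 statements merged into one kernel-verified Lean document; each statement's English description precedes it below -/
import Mathlib

section
/- Let A > 1, p > 1, τ ∈ (0,1], let 𝓔 = { α ∈ L^p(0,1) : α ≥ 0 a.e., ‖α‖_{L^p} ≤ 1, and (1/h) ∫_0^h α(s)^p ds ≤ A ( (1/h) ∫_0^h α(s) ds )^p for all h ∈ (0,1] }, and let ᾱ_τ be the unique maximizer of ∫_0^τ α over 𝓔. If for some h ∈ [τ,1) the reverse Hölder inequality is strict for ᾱ_τ at h, i.e. (1/h) ∫_0^h ᾱ_τ(s)^p ds < A ( (1/h) ∫_0^h ᾱ_τ(s) ds )^p, then ᾱ_τ is (a.e. equal to) a constant on a neighbourhood of h in [τ,1]. -/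
open MeasureTheory Set intervalIntegral

noncomputable section

/-- Lebesgue measure restricted to `(0,1)`. -/
def mu01 : Measure ℝ := volume.restrict (Ioo 0 1)

instance : IsFiniteMeasure mu01 :=
  ⟨by simp [mu01, Real.volume_Ioo]⟩

lemma restrict_Icc01 : volume.restrict (Icc (0:ℝ) 1) = mu01 :=
  (Measure.restrict_congr_set Ioo_ae_eq_Icc).symm

lemma mu01_ae_sub {P : ℝ → Prop} (hP : ∀ᵐ s ∂mu01, P s) {S : Set ℝ}
    (hS : S ⊆ Icc 0 1) : ∀ᵐ s ∂(volume.restrict S), P s := by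
  rw [← restrict_Icc01] at hP
  exact ae_restrict_of_ae_restrict_of_subset hS hP

lemma intervalIntegral_congr_mu01 {F G : ℝ → ℝ} (hFG : ∀ᵐ s ∂mu01, F s = G s)
    {t : ℝ} (ht0 : 0 ≤ t) (ht1 : t ≤ 1) :
    ∫ s in (0:ℝ)..t, F s = ∫ s in (0:ℝ)..t, G s := by
  rw [integral_of_le ht0, integral_of_le ht0]
  exact integral_congr_ae (mu01_ae_sub hFG (Ioc_subset_Icc_self.trans
    (Icc_subset_Icc le_rfl ht1)))

lemma rpow_aux {p x : ℝ} (hx : 0 < x) : (1/x) ^ p * x ^ (p-1) = 1/x := by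
  rw [Real.rpow_sub hx, Real.rpow_one, one_div, Real.inv_rpow hx.le]
  field_simp

lemma rh_iff {A L X p x : ℝ} (hx : 0 < x) (hX : 0 ≤ X) :
    (1/x) * L ≤ A * ((1/x) * X) ^ p ↔ x ^ (p-1) * L ≤ A * X ^ p := by
  rw [Real.mul_rpow (by positivity) hX]
  have h2 : (0:ℝ) < (1/x) ^ p := Real.rpow_pos_of_pos (by positivity) p
  have e1 : (1/x) * L = (1/x) ^ p * (x ^ (p-1) * L) := by
    rw [← mul_assoc, rpow_aux hx]
  have e2 : A * ((1/x) ^ p * X ^ p) = (1/x) ^ p * (A * X ^ p) := by ring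
  rw [e1, e2]
  exact mul_le_mul_iff_right₀ h2

lemma rh_iff_lt {A L X p x : ℝ} (hx : 0 < x) (hX : 0 ≤ X) :
    (1/x) * L < A * ((1/x) * X) ^ p ↔ x ^ (p-1) * L < A * X ^ p := by
  rw [Real.mul_rpow (by positivity) hX]
  have h2 : (0:ℝ) < (1/x) ^ p := Real.rpow_pos_of_pos (by positivity) p
  have e1 : (1/x) * L = (1/x) ^ p * (x ^ (p-1) * L) := by
    rw [← mul_assoc, rpow_aux hx]
  have e2 : A * ((1/x) ^ p * X ^ p) = (1/x) ^ p * (A * X ^ p) := by ring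
  rw [e1, e2]
  exact mul_lt_mul_iff_right₀ h2

/-- The set `𝓔` of nonnegative `α ∈ L^p(0,1)` with `‖α‖_p ≤ 1` satisfying the reverse Hölder
condition `(1/h)∫_0^h α^p ≤ A((1/h)∫_0^h α)^p` for all `h ∈ (0,1]`. -/
def calE (A p : ℝ) : Set (Lp ℝ (ENNReal.ofReal p) mu01) :=
  {f | (∀ᵐ s ∂mu01, 0 ≤ f s) ∧ ‖f‖ ≤ 1 ∧
    ∀ h ∈ Ioc (0:ℝ) 1,
      (1 / h) * ∫ s in (0:ℝ)..h, f s ^ p ≤ A * ((1 / h) * ∫ s in (0:ℝ)..h, f s) ^ p}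


/-- `f` is a maximizer of `α ↦ ∫_0^τ α` over `𝓔`. -/
def IsMaximizer (A p τ : ℝ) (f : Lp ℝ (ENNReal.ofReal p) mu01) : Prop :=
  f ∈ calE A p ∧ ∀ g ∈ calE A p, ∫ s in (0:ℝ)..τ, g s ≤ ∫ s in (0:ℝ)..τ, f s

set_option maxHeartbeats 2000000 in
/-- if the reverse Hölder inequality is strict for the maximizer `ᾱ_τ` at some
`h ∈ [τ,1)`, then `ᾱ_τ` is (a.e.) constant on a neighbourhood of `h` in `[τ,1]`. -/
theorem maximizer_locally_constant_of_strict_inequality (A p : ℝ) (hA : 1 < A) (hp : 1 < p)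
    [Fact (1 ≤ ENNReal.ofReal p)]
    (τ : ℝ) (hτ : τ ∈ Ioc (0:ℝ) 1)
    (f : Lp ℝ (ENNReal.ofReal p) mu01) (hf : IsMaximizer A p τ f)
    (h : ℝ) (hh : h ∈ Ico τ 1)
    (hstrict : (1 / h) * ∫ s in (0:ℝ)..h, f s ^ p <
      A * ((1 / h) * ∫ s in (0:ℝ)..h, f s) ^ p) :
    ∃ ε > (0:ℝ), ∃ c : ℝ,
      ∀ᵐ s ∂volume, s ∈ Icc τ 1 → |s - h| < ε → f s = c := by
  obtain ⟨hτ0, hτ1⟩ := hτ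
  obtain ⟨hhτ, hh1⟩ := hh
  have hh0 : 0 < h := lt_of_lt_of_le hτ0 hhτ
  have hp0 : (0:ℝ) < p := lt_trans one_pos hp
  have hq1 : (1:ENNReal) ≤ ENNReal.ofReal p := Fact.out
  have hq0 : ENNReal.ofReal p ≠ 0 := by
    simp only [ne_eq, ENNReal.ofReal_eq_zero, not_le]; exact hp0
  have hqtop : ENNReal.ofReal p ≠ (⊤:ENNReal) := ENNReal.ofReal_ne_top
  have hqto : (ENNReal.ofReal p).toReal = p := ENNReal.toReal_ofReal hp0.le
  set u : ℝ → ℝ := ⇑f with hu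
  obtain ⟨⟨hnn, hnorm, hRH⟩, hmax⟩ := hf
  -- basic integrability
  have hmemf : MemLp u (ENNReal.ofReal p) mu01 := Lp.memLp f
  have hInt : Integrable u mu01 := hmemf.integrable hq1
  have hIntP : Integrable (fun s => |u s| ^ p) mu01 := by
    have := hmemf.integrable_norm_rpow hq0 hqtop
    simpa [hqto, Real.norm_eq_abs] using this
  have hIcc : IntegrableOn u (Icc 0 1) volume := by
    rw [IntegrableOn, restrict_Icc01]; exact hInt
  have hnnIcc : ∀ᵐ s ∂(volume.restrict (Icc (0:ℝ) 1)), 0 ≤ u s :=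
    mu01_ae_sub hnn (subset_refl _)
  have hIccP : IntegrableOn (fun s => u s ^ p) (Icc 0 1) volume := by
    have h1 : IntegrableOn (fun s => |u s| ^ p) (Icc 0 1) volume := by
      rw [IntegrableOn, restrict_Icc01]; exact hIntP
    exact h1.congr (by filter_upwards [hnnIcc] with s hs; rw [abs_of_nonneg hs])
  -- interval integrability
  have hII : ∀ c d : ℝ, 0 ≤ c → c ≤ d → d ≤ 1 → IntervalIntegrable u volume c d := by
    intro c d hc hcd hd
    exact (hIcc.mono_set
      (uIcc_subset_Icc ⟨hc, hcd.trans hd⟩ ⟨hc.trans hcd, hd⟩)).intervalIntegrable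
  have hIIP : ∀ c d : ℝ, 0 ≤ c → c ≤ d → d ≤ 1 →
      IntervalIntegrable (fun s => u s ^ p) volume c d := by
    intro c d hc hcd hd
    exact (hIccP.mono_set
      (uIcc_subset_Icc ⟨hc, hcd.trans hd⟩ ⟨hc.trans hcd, hd⟩)).intervalIntegrable
  have hPnnIcc : ∀ᵐ s ∂(volume.restrict (Icc (0:ℝ) 1)), 0 ≤ u s ^ p := by
    filter_upwards [hnnIcc] with s hs; exact Real.rpow_nonneg hs p
  have hIntNN : ∀ {F : ℝ → ℝ}, (∀ᵐ s ∂(volume.restrict (Icc (0:ℝ) 1)), 0 ≤ F s) →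
      ∀ c d : ℝ, 0 ≤ c → c ≤ d → d ≤ 1 → 0 ≤ ∫ s in c..d, F s := by
    intro F hF c d hc hcd hd
    rw [integral_of_le hcd]
    exact integral_nonneg_of_ae (ae_restrict_of_ae_restrict_of_subset
      (Ioc_subset_Icc_self.trans (Icc_subset_Icc hc hd)) hF)
  -- the constant function 1 belongs to calE
  have hμuniv : mu01 univ = 1 := by
    simp [mu01, Real.volume_Ioo]
  have hμuniv' : mu01 univ ≠ (⊤:ENNReal) := by rw [hμuniv]; exact ENNReal.one_ne_top
  set one : Lp ℝ (ENNReal.ofReal p) mu01 :=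
    indicatorConstLp (ENNReal.ofReal p) MeasurableSet.univ hμuniv' (1:ℝ) with hone
  have hone_coe : ∀ᵐ s ∂mu01, one s = (1:ℝ) := by
    filter_upwards [indicatorConstLp_coeFn
      (p := ENNReal.ofReal p) (hs := MeasurableSet.univ) (hμs := hμuniv') (c := (1:ℝ))] with s hs
    rw [hone, hs]; simp
  have honeE : one ∈ calE A p := by
    refine ⟨by filter_upwards [hone_coe] with s hs; rw [hs]; norm_num, ?_, ?_⟩
    · rw [hone, norm_indicatorConstLp hq0 hqtop]
      simp [measureReal_def, hμuniv]
    · intro t ht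
      have h1 : (∫ s in (0:ℝ)..t, one s) = t := by
        rw [intervalIntegral_congr_mu01 hone_coe ht.1.le ht.2]
        simp
      have h2 : (∫ s in (0:ℝ)..t, one s ^ p) = t := by
        have : ∀ᵐ s ∂mu01, one s ^ p = (1:ℝ) := by
          filter_upwards [hone_coe] with s hs; rw [hs, Real.one_rpow]
        rw [intervalIntegral_congr_mu01 this ht.1.le ht.2]
        simp
      rw [h1, h2, one_div_mul_cancel (ne_of_gt ht.1), Real.one_rpow, mul_one]
      linarith
  have hIτ : τ ≤ ∫ s in (0:ℝ)..τ, u s := by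
    have := hmax one honeE
    rwa [intervalIntegral_congr_mu01 hone_coe hτ0.le hτ1, integral_one, sub_zero] at this
  -- primitives and their continuity
  set Iu : ℝ → ℝ := fun x => ∫ s in (0:ℝ)..x, u s with hIudef
  set IP : ℝ → ℝ := fun x => ∫ s in (0:ℝ)..x, u s ^ p with hIPdef
  have hIu_cont : ContinuousOn Iu (Icc 0 1) := by
    have := continuousOn_primitive_interval (a := (0:ℝ)) (b := (1:ℝ))
      (μ := volume) (f := u) (by rwa [uIcc_of_le zero_le_one])
    rwa [uIcc_of_le zero_le_one] at this
  have hIP_cont : ContinuousOn IP (Icc 0 1) := by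
    have := continuousOn_primitive_interval (a := (0:ℝ)) (b := (1:ℝ))
      (μ := volume) (f := fun s => u s ^ p) (by rwa [uIcc_of_le zero_le_one])
    rwa [uIcc_of_le zero_le_one] at this
  set Φ : ℝ → ℝ := fun ε => A * (Iu (max τ (h - ε))) ^ p - (h + ε) ^ (p-1) * IP (h + ε)
    with hΦdef
  have hIuh_nn : 0 ≤ Iu h := hIntNN hnnIcc 0 h le_rfl hh0.le hh1.le
  have hΦ0 : 0 < Φ 0 := by
    have h1 := (rh_iff_lt hh0 hIuh_nn).mp hstrict
    have e : max τ (h - 0) = h := by rw [sub_zero, max_eq_right hhτ]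
    simp only [hΦdef, e, add_zero]
    linarith
  have hmaxc : Continuous fun ε : ℝ => max τ (h - ε) :=
    continuous_const.max (continuous_const.sub continuous_id)
  have haddc : Continuous fun ε : ℝ => h + ε := continuous_const.add continuous_id
  have hmaps : MapsTo (fun ε : ℝ => max τ (h - ε)) (Icc 0 (1 - h)) (Icc 0 1) := by
    intro x hx
    exact ⟨le_trans hτ0.le (le_max_left _ _), max_le hτ1 (by linarith [hx.1])⟩
  have hmaps2 : MapsTo (fun ε : ℝ => h + ε) (Icc 0 (1 - h)) (Icc 0 1) := by
    intro x hx
    simp only [mem_Icc] at hx ⊢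
    constructor <;> [linarith [hx.1]; linarith [hx.2]]
  have hΦcont : ContinuousOn Φ (Icc 0 (1 - h)) := by
    apply ContinuousOn.sub
    · exact continuousOn_const.mul
        (ContinuousOn.rpow_const (hIu_cont.comp hmaxc.continuousOn hmaps)
          (fun x _ => Or.inr hp0.le))
    · exact ContinuousOn.mul
        (ContinuousOn.rpow_const haddc.continuousOn
          (fun x hx => Or.inl (by have := hx.1; positivity)))
        (hIP_cont.comp haddc.continuousOn hmaps2)
  have h1h : 0 < 1 - h := by linarith
  have hev : ∀ᶠ ε in nhdsWithin 0 (Icc 0 (1 - h)), 0 < Φ ε :=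
    (hΦcont 0 ⟨le_rfl, h1h.le⟩).eventually (lt_mem_nhds hΦ0)
  obtain ⟨O, hOopen, hO0, hOsub⟩ := mem_nhdsWithin.mp hev
  obtain ⟨δ, hδ0, hδ⟩ := Metric.isOpen_iff.mp hOopen 0 hO0
  set ε := min (δ/2) ((1-h)/2) with hεdef
  have hε0 : 0 < ε := lt_min (by linarith) (by linarith)
  have hεlt : ε < 1 - h := lt_of_le_of_lt (min_le_right _ _) (by linarith)
  have hΦε : 0 < Φ ε := by
    apply hOsub
    refine ⟨hδ ?_, hε0.le, by linarith⟩
    rw [Metric.mem_ball, Real.dist_eq, sub_zero, abs_of_pos hε0]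
    exact lt_of_le_of_lt (min_le_left _ _) (by linarith)
  -- the interval (a, b]
  set a := max τ (h - ε) with hadef
  set b := h + ε with hbdef
  have hτa : τ ≤ a := le_max_left _ _
  have h0a : 0 < a := lt_of_lt_of_le hτ0 hτa
  have hah : a ≤ h := max_le hhτ (by linarith)
  have hab : a < b := lt_of_le_of_lt hah (by simp only [hbdef]; linarith)
  have hb1 : b < 1 := by simp only [hbdef]; linarith
  have hb0 : 0 < b := lt_trans h0a hab
  have hkey : b ^ (p-1) * IP b ≤ A * (Iu a) ^ p := by
    simp only [hΦdef] at hΦε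
    linarith
  -- Jensen dichotomy on S = Ioc a b
  set S := Ioc a b with hSdef
  have hSsub : S ⊆ Icc (0:ℝ) 1 :=
    Ioc_subset_Icc_self.trans (Icc_subset_Icc h0a.le hb1.le)
  have hSvol : volume S = ENNReal.ofReal (b - a) := by
    rw [hSdef, Real.volume_Ioc]
  haveI : IsFiniteMeasure (volume.restrict S) := ⟨by
    rw [Measure.restrict_apply_univ, hSvol]; exact ENNReal.ofReal_lt_top⟩
  have hfiS : Integrable u (volume.restrict S) := hIcc.mono_set hSsub
  have hgiS : Integrable ((fun t : ℝ => t ^ p) ∘ u) (volume.restrict S) :=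
    hIccP.mono_set hSsub
  have hfsS : ∀ᵐ x ∂(volume.restrict S), u x ∈ Ici (0:ℝ) := by
    filter_upwards [mu01_ae_sub hnn hSsub] with s hs; exact hs
  have hconte : ContinuousOn (fun t : ℝ => t ^ p) (Ici 0) :=
    fun x _ => (Real.continuousAt_rpow_const x p (Or.inr hp0.le)).continuousWithinAt
  set m' : ℝ := ⨍ x, u x ∂(volume.restrict S) with hm'def
  rcases (strictConvexOn_rpow hp).ae_eq_const_or_map_average_lt hconte isClosed_Ici
      hfsS hfiS hgiS with hconst | hlt
  · -- f is a.e. constant on S : done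
    refine ⟨ε, hε0, m', ?_⟩
    have h1 : ∀ᵐ s ∂volume, s ∈ S → u s = m' :=
      (ae_restrict_iff' measurableSet_Ioc).mp hconst
    have h2 : ∀ᵐ s : ℝ ∂volume, s ≠ a := by
      rw [ae_iff]; simp
    filter_upwards [h1, h2] with s hs hsa hsIcc hsball
    apply hs
    rw [abs_lt] at hsball
    constructor
    · exact lt_of_le_of_ne (max_le hsIcc.1 (by linarith [hsball.1])) (Ne.symm hsa)
    · simp only [hbdef]; linarith [hsball.2]
  -- otherwise derive a contradiction
  exfalso
  have hba0 : (0:ℝ) < b - a := by linarith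
  have hSvol' : (volume S).toReal = b - a := by
    rw [hSvol, ENNReal.toReal_ofReal hba0.le]
  have hm'eq : m' = (b - a)⁻¹ * ∫ x in S, u x ∂volume := by
    rw [hm'def, average_eq, measureReal_def, Measure.restrict_apply_univ, hSvol', smul_eq_mul]
  have hintSu : (∫ x in S, u x ∂volume) = (b - a) * m' := by
    rw [hm'eq]; field_simp
  have hm'0 : 0 ≤ m' := by
    rw [hm'eq]
    exact mul_nonneg (by positivity) (integral_nonneg_of_ae
      (by filter_upwards [hfsS] with s hs; exact hs))
  have hJensen : (b - a) * m' ^ p < ∫ x in S, u x ^ p ∂volume := by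
    have hlt2 : m' ^ p < (b - a)⁻¹ * ∫ x in S, u x ^ p ∂volume := by
      calc m' ^ p < ⨍ x, (fun t : ℝ => t ^ p) (u x) ∂(volume.restrict S) := hlt
        _ = (b - a)⁻¹ * ∫ x in S, u x ^ p ∂volume := by
            rw [average_eq, measureReal_def, Measure.restrict_apply_univ, hSvol', smul_eq_mul]
    calc (b - a) * m' ^ p < (b - a) * ((b - a)⁻¹ * ∫ x in S, u x ^ p ∂volume) :=
          mul_lt_mul_of_pos_left hlt2 hba0
      _ = ∫ x in S, u x ^ p ∂volume := by field_simp
  -- the perturbed function G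
  set G : ℝ → ℝ := fun s => if s ∈ S then m' else u s with hGdef
  have hGin : ∀ s ∈ S, G s = m' := fun s hs => by simp [hGdef, hs]
  have hGout : ∀ s, s ∉ S → G s = u s := fun s hs => by simp [hGdef, hs]
  have hGeq : G = S.indicator (fun _ => m') + (Sᶜ).indicator u := by
    funext s
    by_cases hs : s ∈ S <;>
      simp [hGdef, hs, Set.indicator_of_mem, Set.indicator_of_notMem]
  have hGmem : MemLp G (ENNReal.ofReal p) mu01 := by
    rw [hGeq]
    exact (memLp_indicator_const _ measurableSet_Ioc m'
      (Or.inr (measure_ne_top mu01 S))).add (hmemf.indicator measurableSet_Ioc.compl)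
  set g : Lp ℝ (ENNReal.ofReal p) mu01 := hGmem.toLp G with hgdef
  have hg_coe : ∀ᵐ s ∂mu01, g s = G s := hGmem.coeFn_toLp
  have hGnn : ∀ᵐ s ∂mu01, 0 ≤ G s := by
    filter_upwards [hnn] with s hs
    simp only [hGdef]
    split
    · exact hm'0
    · exact hs
  have hGnnIcc : ∀ᵐ s ∂(volume.restrict (Icc (0:ℝ) 1)), 0 ≤ G s :=
    mu01_ae_sub hGnn (subset_refl _)
  have hGPnnIcc : ∀ᵐ s ∂(volume.restrict (Icc (0:ℝ) 1)), 0 ≤ G s ^ p := by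
    filter_upwards [hGnnIcc] with s hs; exact Real.rpow_nonneg hs p
  have hGInt : Integrable G mu01 := hGmem.integrable hq1
  have hGIcc : IntegrableOn G (Icc 0 1) volume := by
    rw [IntegrableOn, restrict_Icc01]; exact hGInt
  have hGIntP : Integrable (fun s => |G s| ^ p) mu01 := by
    have := hGmem.integrable_norm_rpow hq0 hqtop
    simpa [hqto, Real.norm_eq_abs] using this
  have hGIccP : IntegrableOn (fun s => G s ^ p) (Icc 0 1) volume := by
    have h2 : IntegrableOn (fun s => |G s| ^ p) (Icc 0 1) volume := by
      rw [IntegrableOn, restrict_Icc01]; exact hGIntP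
    exact h2.congr (by filter_upwards [hGnnIcc] with s hs; rw [abs_of_nonneg hs])
  have hIIG : ∀ c d : ℝ, 0 ≤ c → c ≤ d → d ≤ 1 → IntervalIntegrable G volume c d := by
    intro c d hc hcd hd
    exact (hGIcc.mono_set
      (uIcc_subset_Icc ⟨hc, hcd.trans hd⟩ ⟨hc.trans hcd, hd⟩)).intervalIntegrable
  have hIIGP : ∀ c d : ℝ, 0 ≤ c → c ≤ d → d ≤ 1 →
      IntervalIntegrable (fun s => G s ^ p) volume c d := by
    intro c d hc hcd hd
    exact (hGIccP.mono_set
      (uIcc_subset_Icc ⟨hc, hcd.trans hd⟩ ⟨hc.trans hcd, hd⟩)).intervalIntegrable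
  -- G agrees with u below a
  have hEqOnLow : ∀ t : ℝ, t ≤ a → EqOn G u (Ioc 0 t) := by
    intro t hta s hs
    exact hGout s (fun hsS => by
      have h1 : s ≤ t := hs.2
      have h2 : a < s := hsS.1
      linarith)
  have hF1 : ∀ t : ℝ, 0 ≤ t → t ≤ a → (∫ s in (0:ℝ)..t, G s) = ∫ s in (0:ℝ)..t, u s := by
    intro t ht0 hta
    rw [integral_of_le ht0, integral_of_le ht0]
    exact setIntegral_congr_fun measurableSet_Ioc (hEqOnLow t hta)
  have hF1P : ∀ t : ℝ, 0 ≤ t → t ≤ a →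
      (∫ s in (0:ℝ)..t, G s ^ p) = ∫ s in (0:ℝ)..t, u s ^ p := by
    intro t ht0 hta
    rw [integral_of_le ht0, integral_of_le ht0]
    exact setIntegral_congr_fun measurableSet_Ioc (fun s hs => by rw [hEqOnLow t hta hs])
  -- G agrees with u above b
  have hEqOnHigh : ∀ t : ℝ, EqOn G u (Ioc b t) := by
    intro t s hs
    exact hGout s (fun hsS => by
      have h1 : b < s := hs.1
      have h2 : s ≤ b := hsS.2
      linarith)
  -- integrals over S
  have hSint_G : (∫ s in a..b, G s) = (b - a) * m' := by
    rw [integral_of_le hab.le,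
      setIntegral_congr_fun measurableSet_Ioc (fun s (hs : s ∈ Ioc a b) => hGin s hs),
      setIntegral_const, measureReal_def, hSvol', smul_eq_mul]
  have hSint_GP : (∫ s in a..b, G s ^ p) = (b - a) * m' ^ p := by
    rw [integral_of_le hab.le,
      setIntegral_congr_fun measurableSet_Ioc
        (fun s (hs : s ∈ Ioc a b) => by
          show G s ^ p = m' ^ p
          rw [hGin s hs] : EqOn (fun s => G s ^ p) (fun _ => m' ^ p) (Ioc a b)),
      setIntegral_const, measureReal_def, hSvol', smul_eq_mul]
  -- split at a and b
  have hGb : (∫ s in (0:ℝ)..b, G s) = ∫ s in (0:ℝ)..b, u s := by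
    rw [← integral_add_adjacent_intervals (hIIG 0 a le_rfl h0a.le (by linarith))
        (hIIG a b h0a.le hab.le hb1.le),
      ← integral_add_adjacent_intervals (hII 0 a le_rfl h0a.le (by linarith))
        (hII a b h0a.le hab.le hb1.le),
      hF1 a h0a.le le_rfl, hSint_G, ← hintSu, integral_of_le hab.le]
  have hGbP : (∫ s in (0:ℝ)..b, G s ^ p) < ∫ s in (0:ℝ)..b, u s ^ p := by
    rw [← integral_add_adjacent_intervals (hIIGP 0 a le_rfl h0a.le (by linarith))
        (hIIGP a b h0a.le hab.le hb1.le),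
      ← integral_add_adjacent_intervals (hIIP 0 a le_rfl h0a.le (by linarith))
        (hIIP a b h0a.le hab.le hb1.le),
      hF1P a h0a.le le_rfl, hSint_GP]
    have h2 : (∫ s in a..b, u s ^ p) = ∫ x in S, u x ^ p ∂volume := integral_of_le hab.le
    rw [h2]
    linarith [hJensen]
  -- equal integrals above b
  have hF5 : ∀ t : ℝ, b ≤ t → t ≤ 1 →
      ((∫ s in (0:ℝ)..t, G s) = ∫ s in (0:ℝ)..t, u s) ∧
      ((∫ s in (0:ℝ)..t, G s ^ p) ≤ ∫ s in (0:ℝ)..t, u s ^ p) := by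
    intro t hbt ht1
    have e1 : (∫ s in b..t, G s) = ∫ s in b..t, u s := by
      rw [integral_of_le hbt, integral_of_le hbt]
      exact setIntegral_congr_fun measurableSet_Ioc (hEqOnHigh t)
    have e2 : (∫ s in b..t, G s ^ p) = ∫ s in b..t, u s ^ p := by
      rw [integral_of_le hbt, integral_of_le hbt]
      exact setIntegral_congr_fun measurableSet_Ioc (fun s hs => by rw [hEqOnHigh t hs])
    constructor
    · rw [← integral_add_adjacent_intervals (hIIG 0 b le_rfl hb0.le hb1.le)
          (hIIG b t hb0.le hbt ht1),
        ← integral_add_adjacent_intervals (hII 0 b le_rfl hb0.le hb1.le)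
          (hII b t hb0.le hbt ht1), hGb, e1]
    · rw [← integral_add_adjacent_intervals (hIIGP 0 b le_rfl hb0.le hb1.le)
          (hIIGP b t hb0.le hbt ht1),
        ← integral_add_adjacent_intervals (hIIP 0 b le_rfl hb0.le hb1.le)
          (hIIP b t hb0.le hbt ht1), e2]
      linarith [hGbP]
  -- splitting of the full integral over (0,1)
  have hsetsplit : Ioo (0:ℝ) 1 = Ioc 0 b ∪ Ioo b 1 := by
    ext x
    simp only [mem_Ioo, mem_Ioc, mem_union]
    constructor
    · rintro ⟨h1, h2⟩
      rcases le_or_gt x b with hxb | hxb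
      · exact Or.inl ⟨h1, hxb⟩
      · exact Or.inr ⟨hxb, h2⟩
    · rintro (⟨h1, h2⟩ | ⟨h1, h2⟩)
      · exact ⟨h1, lt_of_le_of_lt h2 hb1⟩
      · exact ⟨lt_trans hb0 h1, h2⟩
  have hdisj : Disjoint (Ioc (0:ℝ) b) (Ioo b 1) := by
    rw [Set.disjoint_left]
    rintro x ⟨_, hxb⟩ ⟨hbx, _⟩
    exact absurd hbx (not_lt.mpr hxb)
  have hsplit_int : ∀ {F : ℝ → ℝ}, IntegrableOn F (Icc 0 1) volume →
      (∫ s, F s ∂mu01) = (∫ s in (0:ℝ)..b, F s) + ∫ s in Ioo b 1, F s ∂volume := by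
    intro F hF
    have h1 : (∫ s, F s ∂mu01) = ∫ s in Ioo (0:ℝ) 1, F s ∂volume := rfl
    rw [h1, hsetsplit, setIntegral_union hdisj measurableSet_Ioo
      (hF.mono_set (Ioc_subset_Icc_self.trans (Icc_subset_Icc le_rfl hb1.le)))
      (hF.mono_set (Ioo_subset_Icc_self.trans (Icc_subset_Icc hb0.le le_rfl))),
      ← integral_of_le hb0.le]
  have htail : (∫ s in Ioo b 1, G s ∂volume) = ∫ s in Ioo b 1, u s ∂volume :=
    setIntegral_congr_fun measurableSet_Ioo
      (fun s hs => hGout s (fun hsS => absurd hs.1 (not_lt.mpr hsS.2)))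
  have htailP : (∫ s in Ioo b 1, G s ^ p ∂volume) = ∫ s in Ioo b 1, u s ^ p ∂volume :=
    setIntegral_congr_fun measurableSet_Ioo
      (fun s hs => by
        show G s ^ p = u s ^ p
        rw [hGout s (fun hsS => absurd hs.1 (not_lt.mpr hsS.2))])
  have hNlt : (∫ s, G s ^ p ∂mu01) < ∫ s, u s ^ p ∂mu01 := by
    rw [hsplit_int hGIccP, hsplit_int hIccP, htailP]
    linarith [hGbP]
  -- norms
  have habsG : (∫ s, |G s| ^ p ∂mu01) = ∫ s, G s ^ p ∂mu01 :=
    integral_congr_ae (by filter_upwards [hGnn] with s hs; rw [abs_of_nonneg hs])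
  have habsu : (∫ s, |u s| ^ p ∂mu01) = ∫ s, u s ^ p ∂mu01 :=
    integral_congr_ae (by filter_upwards [hnn] with s hs; rw [abs_of_nonneg hs])
  have hnormf : ‖f‖ = (∫ s, |u s| ^ p ∂mu01) ^ (1/p) := by
    rw [Lp.norm_def, hmemf.eLpNorm_eq_integral_rpow_norm hq0 hqtop, hqto,
      ENNReal.toReal_ofReal (Real.rpow_nonneg
        (integral_nonneg (fun s => by positivity)) _), one_div]
    simp [Real.norm_eq_abs]
  have hnormg : ‖g‖ = (∫ s, |G s| ^ p ∂mu01) ^ (1/p) := by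
    rw [hgdef, Lp.norm_toLp, hGmem.eLpNorm_eq_integral_rpow_norm hq0 hqtop, hqto,
      ENNReal.toReal_ofReal (Real.rpow_nonneg
        (integral_nonneg (fun s => by positivity)) _), one_div]
    simp [Real.norm_eq_abs]
  have hNu_nn : 0 ≤ ∫ s, |u s| ^ p ∂mu01 := integral_nonneg (fun s => by positivity)
  have hNu1 : (∫ s, |u s| ^ p ∂mu01) ≤ 1 := by
    have h1 : (∫ s, |u s| ^ p ∂mu01) ^ (1/p) ≤ 1 := by rw [← hnormf]; exact hnorm
    have h2 := Real.rpow_le_rpow (Real.rpow_nonneg hNu_nn _) h1 hp0.le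
    rwa [← Real.rpow_mul hNu_nn, one_div, inv_mul_cancel₀ (ne_of_gt hp0),
      Real.rpow_one, Real.one_rpow] at h2
  have hNg_lt1 : (∫ s, |G s| ^ p ∂mu01) < 1 := by
    rw [habsG]
    calc (∫ s, G s ^ p ∂mu01) < ∫ s, u s ^ p ∂mu01 := hNlt
      _ = ∫ s, |u s| ^ p ∂mu01 := habsu.symm
      _ ≤ 1 := hNu1
  have hgnorm_lt : ‖g‖ < 1 := by
    rw [hnormg]
    exact Real.rpow_lt_one (integral_nonneg (fun s => by positivity)) hNg_lt1
      (by positivity)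
  -- positivity of the norm of g
  have hG0τ : (∫ s in (0:ℝ)..τ, G s) = ∫ s in (0:ℝ)..τ, u s := hF1 τ hτ0.le hτa
  have hGτpos : 0 < ∫ s in (0:ℝ)..τ, G s := by rw [hG0τ]; linarith
  have hgnorm_pos : 0 < ‖g‖ := by
    rcases lt_or_eq_of_le (norm_nonneg g) with h1 | h1
    · exact h1
    have hzero : g = 0 := by
      rw [← norm_eq_zero]; exact h1.symm
    have hgz : ∀ᵐ s ∂mu01, G s = 0 := by
      have h2 := Lp.coeFn_zero ℝ (ENNReal.ofReal p) mu01
      rw [← hzero] at h2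
      filter_upwards [hg_coe, h2] with s hs1 hs2
      rw [← hs1, hs2]; rfl
    have h3 : (∫ s in (0:ℝ)..τ, G s) = 0 := by
      rw [intervalIntegral_congr_mu01 hgz hτ0.le hτ1]
      simp
    linarith
  -- reverse Hölder inequality for G
  have hGRH : ∀ t ∈ Ioc (0:ℝ) 1,
      (1/t) * (∫ s in (0:ℝ)..t, G s ^ p) ≤ A * ((1/t) * ∫ s in (0:ℝ)..t, G s) ^ p := by
    intro t ht
    obtain ⟨ht0, ht1⟩ := ht
    rcases le_or_gt t a with hta | hat
    · rw [hF1 t ht0.le hta, hF1P t ht0.le hta]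
      exact hRH t ⟨ht0, ht1⟩
    rcases lt_or_ge t b with htb | hbt
    · -- a < t < b : use the chosen ε
      have hXa : 0 ≤ Iu a := hIntNN hnnIcc 0 a le_rfl h0a.le (by linarith)
      have hXY : Iu a ≤ ∫ s in (0:ℝ)..t, G s := by
        have hsplit : (∫ s in (0:ℝ)..t, G s) =
            (∫ s in (0:ℝ)..a, G s) + ∫ s in a..t, G s :=
          (integral_add_adjacent_intervals (hIIG 0 a le_rfl h0a.le (by linarith))
            (hIIG a t h0a.le hat.le ht1)).symm
        have h2 : 0 ≤ ∫ s in a..t, G s := hIntNN hGnnIcc a t h0a.le hat.le ht1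
        have h3 : (∫ s in (0:ℝ)..a, G s) = Iu a := hF1 a h0a.le le_rfl
        rw [hsplit, h3]
        linarith
      have hL : (∫ s in (0:ℝ)..t, G s ^ p) ≤ IP b := by
        have hsplit : (∫ s in (0:ℝ)..b, G s ^ p) =
            (∫ s in (0:ℝ)..t, G s ^ p) + ∫ s in t..b, G s ^ p :=
          (integral_add_adjacent_intervals (hIIGP 0 t le_rfl ht0.le ht1)
            (hIIGP t b ht0.le htb.le hb1.le)).symm
        have h2 : 0 ≤ ∫ s in t..b, G s ^ p := hIntNN hGPnnIcc t b ht0.le htb.le hb1.le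
        have h3 : (∫ s in (0:ℝ)..b, G s ^ p) < IP b := hGbP
        linarith
      rw [rh_iff ht0 (hIntNN hGnnIcc 0 t le_rfl ht0.le ht1)]
      have hIPb_nn : 0 ≤ ∫ s in (0:ℝ)..t, G s ^ p :=
        hIntNN hGPnnIcc 0 t le_rfl ht0.le ht1
      calc t ^ (p-1) * (∫ s in (0:ℝ)..t, G s ^ p) ≤ b ^ (p-1) * IP b := by
            apply mul_le_mul (Real.rpow_le_rpow ht0.le htb.le (by linarith)) hL hIPb_nn
            exact Real.rpow_nonneg hb0.le _
        _ ≤ A * (Iu a) ^ p := hkey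
        _ ≤ A * (∫ s in (0:ℝ)..t, G s) ^ p := by
            apply mul_le_mul_of_nonneg_left (Real.rpow_le_rpow hXa hXY hp0.le)
            linarith
    · -- b ≤ t
      obtain ⟨he1, he2⟩ := hF5 t hbt ht1
      rw [he1]
      calc (1/t) * (∫ s in (0:ℝ)..t, G s ^ p)
          ≤ (1/t) * ∫ s in (0:ℝ)..t, u s ^ p :=
            mul_le_mul_of_nonneg_left he2 (by positivity)
        _ ≤ A * ((1/t) * ∫ s in (0:ℝ)..t, u s) ^ p := hRH t ⟨ht0, ht1⟩
  -- scale g up to contradict maximality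
  set lam := ‖g‖⁻¹ with hlamdef
  have hlam0 : 0 < lam := inv_pos.mpr hgnorm_pos
  have hlam1 : 1 < lam := (one_lt_inv₀ hgnorm_pos).mpr hgnorm_lt
  set g' := lam • g with hg'def
  have hg'_coe : ∀ᵐ s ∂mu01, g' s = lam * G s := by
    filter_upwards [Lp.coeFn_smul lam g, hg_coe] with s h1 h2
    rw [hg'def, h1, Pi.smul_apply, smul_eq_mul, h2]
  have hg'E : g' ∈ calE A p := by
    refine ⟨?_, ?_, ?_⟩
    · filter_upwards [hg'_coe, hGnn] with s h1 h2
      rw [h1]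
      exact mul_nonneg hlam0.le h2
    · rw [hg'def, norm_smul, Real.norm_eq_abs, abs_of_pos hlam0, hlamdef,
        inv_mul_cancel₀ (ne_of_gt hgnorm_pos)]
    · intro t ht
      have e1 : (∫ s in (0:ℝ)..t, g' s) = lam * ∫ s in (0:ℝ)..t, G s := by
        rw [intervalIntegral_congr_mu01 hg'_coe ht.1.le ht.2, intervalIntegral.integral_const_mul]
      have e2 : (∫ s in (0:ℝ)..t, g' s ^ p) = lam ^ p * ∫ s in (0:ℝ)..t, G s ^ p := by
        have hae : ∀ᵐ s ∂mu01, g' s ^ p = lam ^ p * G s ^ p := by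
          filter_upwards [hg'_coe, hGnn] with s h1 h2
          rw [h1, Real.mul_rpow hlam0.le h2]
        rw [intervalIntegral_congr_mu01 hae ht.1.le ht.2, intervalIntegral.integral_const_mul]
      have hGt_nn : 0 ≤ (1/t) * ∫ s in (0:ℝ)..t, G s :=
        mul_nonneg (by have := ht.1; positivity)
          (hIntNN hGnnIcc 0 t le_rfl ht.1.le ht.2)
      have hlamp : (0:ℝ) < lam ^ p := Real.rpow_pos_of_pos hlam0 p
      have hstep := mul_le_mul_of_nonneg_left (hGRH t ht) hlamp.le
      rw [e1, e2]
      calc (1/t) * (lam ^ p * ∫ s in (0:ℝ)..t, G s ^ p)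
          = lam ^ p * ((1/t) * ∫ s in (0:ℝ)..t, G s ^ p) := by ring
        _ ≤ lam ^ p * (A * ((1/t) * ∫ s in (0:ℝ)..t, G s) ^ p) := hstep
        _ = A * ((1/t) * (lam * ∫ s in (0:ℝ)..t, G s)) ^ p := by
            rw [show (1/t) * (lam * ∫ s in (0:ℝ)..t, G s)
                = lam * ((1/t) * ∫ s in (0:ℝ)..t, G s) from by ring,
              Real.mul_rpow hlam0.le hGt_nn]
            ring
  have hfinal := hmax g' hg'E
  rw [intervalIntegral_congr_mu01 hg'_coe hτ0.le hτ1, intervalIntegral.integral_const_mul, hG0τ] at hfinal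
  have hpos : 0 < (lam - 1) * (∫ s in (0:ℝ)..τ, u s) :=
    mul_pos (by linarith) (by linarith)
  linarith
end
end

section
/- Let A > 1 and p > 1, let γ be the smallest root of φ(s) = s^p − A(1 − p + p s), let 𝓔 = { α ∈ L^p(0,1) : α ≥ 0 a.e., ‖α‖_{L^p} ≤ 1, and (1/h) ∫_0^h α(s)^p ds ≤ A ( (1/h) ∫_0^h α(s) ds )^p for all h ∈ (0,1] }, and define ξ(τ) = max { ∫_0^τ α(s) ds : α ∈ 𝓔 } for τ ∈ (0,1] and ξ(0) = 0. Then there is a constant C = C(A,p) > 0 such that ξ(τ) ≤ C τ^γ for all τ ∈ [0,1]. -/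
open MeasureTheory Set intervalIntegral Filter Topology

set_option maxHeartbeats 2000000

noncomputable section

/-- `ξ(τ) = max{∫_0^τ α : α ∈ 𝓔}` (expressed as a supremum); note `ξ(0) = 0`. -/
def xiFn (A p : ℝ) : ℝ → ℝ :=
  fun τ => sSup ((fun f : Lp ℝ (ENNReal.ofReal p) mu01 => ∫ s in (0:ℝ)..τ, f s) '' calE A p)

/-- Tangent line (Young) inequality for `rpow`. -/
lemma young_rpow {p : ℝ} (hp : 1 < p) {x lam : ℝ} (hx : 0 ≤ x) (hlam : 0 ≤ lam) :
    p * lam ^ (p - 1) * x ≤ x ^ p + (p - 1) * lam ^ p := by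
  rcases eq_or_lt_of_le hlam with h0 | hlam
  · rw [← h0, Real.zero_rpow (by linarith : p - 1 ≠ 0), Real.zero_rpow (by positivity : p ≠ 0)]
    simpa using Real.rpow_nonneg hx p
  · have hs : -1 ≤ x / lam - 1 := by
      have : 0 ≤ x / lam := div_nonneg hx hlam.le
      linarith
    have hB := one_add_mul_self_le_rpow_one_add hs hp.le
    have h1 : (1 : ℝ) + (x / lam - 1) = x / lam := by ring
    rw [h1, Real.div_rpow hx hlam.le] at hB
    have hlp : (0:ℝ) < lam ^ p := Real.rpow_pos_of_pos hlam p
    have key : lam ^ p = lam ^ (p-1) * lam := by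
      rw [← Real.rpow_add_one hlam.ne' (p-1), sub_add_cancel]
    have h3 := mul_le_mul_of_nonneg_right hB hlp.le
    rw [div_mul_cancel₀ _ hlp.ne'] at h3
    have expand : (1 + p * (x / lam - 1)) * lam ^ p
        = lam ^ p + p * lam ^ (p-1) * x - p * lam ^ p := by
      rw [key]; field_simp; ring
    rw [expand] at h3
    linarith

/-- Hölder inequality in power form on an interval, for nonnegative integrands. -/
lemma holder_rpow {p : ℝ} (hp : 1 < p) {α : ℝ → ℝ} (hα0 : ∀ s, 0 ≤ α s)
    {a b : ℝ} (hab : a ≤ b)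
    (hint1 : IntegrableOn α (Ioc a b) volume)
    (hintp : IntegrableOn (fun s => α s ^ p) (Ioc a b) volume) :
    (∫ s in a..b, α s) ^ p ≤ (b - a) ^ (p - 1) * ∫ s in a..b, α s ^ p := by
  have hp0 : (0:ℝ) < p := by linarith
  have hΔy0 : 0 ≤ ∫ s in a..b, α s :=
    intervalIntegral.integral_nonneg hab (fun s _ => hα0 s)
  have hΔQ0 : 0 ≤ ∫ s in a..b, α s ^ p :=
    intervalIntegral.integral_nonneg hab (fun s _ => Real.rpow_nonneg (hα0 s) p)
  rcases eq_or_lt_of_le hab with rfl | hab'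
  · simp [Real.zero_rpow hp0.ne']
  have htpos : (0:ℝ) < b - a := by linarith
  set Δy := ∫ s in a..b, α s with hΔy
  set ΔQ := ∫ s in a..b, α s ^ p with hΔQ
  rcases eq_or_lt_of_le hΔQ0 with hQ0 | hQpos
  · -- ΔQ = 0 forces Δy = 0
    have hae : ∀ᵐ s ∂(volume.restrict (Ioc a b)), α s ^ p = 0 := by
      have := (integral_eq_zero_iff_of_nonneg
        (f := fun s => α s ^ p) (fun s => Real.rpow_nonneg (hα0 s) p) hintp).1 ?_
      · filter_upwards [this] with s hs using hs
      · rw [← intervalIntegral.integral_of_le hab]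
        exact hQ0.symm
    have hae2 : ∀ᵐ s ∂(volume.restrict (Ioc a b)), α s = 0 := by
      filter_upwards [hae] with s hs
      by_contra hne
      have hpos : 0 < α s := lt_of_le_of_ne (hα0 s) (Ne.symm hne)
      exact absurd hs (Real.rpow_pos_of_pos hpos p).ne'
    have hΔy0' : Δy = 0 := by
      rw [hΔy, intervalIntegral.integral_of_le hab]
      rw [integral_congr_ae (g := fun _ => (0:ℝ)) (by filter_upwards [hae2] with s hs using hs)]
      simp
    rw [hΔy0', ← hQ0, Real.zero_rpow hp0.ne']
    simp
  · -- main case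
    set lam := (ΔQ / (b - a)) ^ (1/p) with hlamdef
    have hlam0 : 0 < lam := Real.rpow_pos_of_pos (div_pos hQpos htpos) _
    have hptw : ∀ s, p * lam ^ (p-1) * α s ≤ α s ^ p + (p-1) * lam ^ p :=
      fun s => young_rpow hp (hα0 s) hlam0.le
    have hii1 : IntervalIntegrable α volume a b :=
      (intervalIntegrable_iff_integrableOn_Ioc_of_le hab).2 hint1
    have hiip : IntervalIntegrable (fun s => α s ^ p) volume a b :=
      (intervalIntegrable_iff_integrableOn_Ioc_of_le hab).2 hintp
    have hInt : p * lam ^ (p-1) * Δy ≤ ΔQ + (p-1) * lam ^ p * (b - a) := by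
      have h1 : ∫ s in a..b, p * lam ^ (p-1) * α s ≤
          ∫ s in a..b, (α s ^ p + (p-1) * lam ^ p) := by
        apply intervalIntegral.integral_mono_on hab (hii1.const_mul _)
          (hiip.add intervalIntegrable_const) (fun s _ => hptw s)
      rw [intervalIntegral.integral_const_mul] at h1
      rw [intervalIntegral.integral_add hiip intervalIntegrable_const,
        intervalIntegral.integral_const] at h1
      simpa [smul_eq_mul, mul_comm] using h1
    have hlamp : lam ^ p * (b - a) = ΔQ := by
      rw [hlamdef, ← Real.rpow_mul (div_pos hQpos htpos).le,
        one_div_mul_cancel hp0.ne', Real.rpow_one, div_mul_cancel₀ _ htpos.ne']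
    have hkey : lam ^ (p-1) * Δy ≤ ΔQ := by
      have h2 : p * lam ^ (p-1) * Δy ≤ p * ΔQ := by
        calc p * lam ^ (p-1) * Δy ≤ ΔQ + (p-1) * lam ^ p * (b - a) := hInt
        _ = ΔQ + (p-1) * ΔQ := by rw [mul_assoc, hlamp]
        _ = p * ΔQ := by ring
      nlinarith
    have hlampm : 0 < lam ^ (p-1) := Real.rpow_pos_of_pos hlam0 _
    have hmid : Δy ≤ ΔQ ^ (1/p) * (b - a) ^ ((p-1)/p) := by
      have e1 : lam ^ (p-1) = ΔQ ^ ((p-1)/p) / (b - a) ^ ((p-1)/p) := by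
        rw [hlamdef, ← Real.rpow_mul (div_pos hQpos htpos).le,
          (by field_simp : 1/p * (p-1) = (p-1)/p), Real.div_rpow hQpos.le htpos.le]
      have hex : ΔQ / ΔQ ^ ((p-1)/p) = ΔQ ^ (1/p) := by
        nth_rewrite 1 [← Real.rpow_one ΔQ]
        rw [← Real.rpow_sub hQpos, (by field_simp; ring : (1:ℝ) - (p-1)/p = 1/p)]
      have e2 : ΔQ / lam ^ (p-1) = ΔQ ^ (1/p) * (b - a) ^ ((p-1)/p) := by
        rw [e1, div_div_eq_mul_div, mul_div_right_comm, hex]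
      rw [← e2, le_div_iff₀ hlampm, mul_comm]
      exact hkey
    have hfin := Real.rpow_le_rpow hΔy0 hmid hp0.le
    calc Δy ^ p ≤ (ΔQ ^ (1/p) * (b - a) ^ ((p-1)/p)) ^ p := hfin
    _ = ΔQ * (b - a) ^ (p-1) := by
        rw [Real.mul_rpow (by positivity) (by positivity),
          ← Real.rpow_mul hQpos.le, ← Real.rpow_mul htpos.le,
          (by field_simp : 1/p * p = 1), (by field_simp : (p-1)/p * p = p-1),
          Real.rpow_one]
    _ = (b - a) ^ (p-1) * ΔQ := by ring

lemma eps_step (A p γ : ℝ) (hA : 1 < A) (hp : 1 < p)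
    (hγpos : 0 < γ) (hb : 0 < 1 - p + p * γ) (hroot : γ ^ p = A * (1 - p + p * γ))
    (Y Q P R : ℝ → ℝ)
    (hYc : Continuous Y) (hQc : Continuous Q)
    (hYmono : Monotone Y)
    (hY0 : ∀ h, 0 ≤ h → 0 ≤ Y h) (hY1 : ∀ h, Y h ≤ 1)
    (hPd : ∀ x, HasDerivAt P (Y x) x) (hRd : ∀ x, HasDerivAt R (Q x) x)
    (hPsub : ∀ a b : ℝ, P b - P a = ∫ s in a..b, Y s)
    (hRsub : ∀ a b : ℝ, R b - R a = ∫ s in a..b, Q s)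
    (hhold : ∀ a b : ℝ, a ≤ b → (Y b - Y a) ^ p ≤ (b - a) ^ (p-1) * (Q b - Q a))
    (hcon2 : ∀ u t : ℝ, 0 < u → u ≤ 1 → u ≤ t → Q t ≤ A * u ^ (1-p) * Y t ^ p)
    (τ : ℝ) (hτ0 : 0 < τ) (hτ1 : τ ≤ 1)
    (ε : ℝ) (hε : 0 < ε) :
    τ ^ (p-1-γ*p) * ((R (τ+ε) - R τ)/ε)
      - γ^(p-1) * (τ ^ (-(γ*p)) * (((P (τ+ε) - P τ)/ε) ^ p))
    ≤ (R (1+ε) - R 1)/ε - γ^(p-1) * (((P (1+ε) - P 1)/ε) ^ p)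
      + (γ^p * τ^(-(γ*p)-1)) * ε := by
  have hp0 : (0:ℝ) < p := by linarith
  have hA0 : (0:ℝ) < A := by linarith
  set yb : ℝ → ℝ := fun h => (P (h+ε) - P h)/ε with hybdef
  set qb : ℝ → ℝ := fun h => (R (h+ε) - R h)/ε with hqbdef
  -- basic facts about the sliding averages
  have hybInt : ∀ h : ℝ, yb h = (1/ε) * ∫ s in h..(h+ε), Y s := by
    intro h; rw [hybdef]; simp only []; rw [hPsub h (h+ε)]; ring
  have hqbInt : ∀ h : ℝ, qb h = (1/ε) * ∫ s in h..(h+ε), Q s := by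
    intro h; rw [hqbdef]; simp only []; rw [hRsub h (h+ε)]; ring
  have hle : ∀ h : ℝ, h ≤ h + ε := fun h => by linarith
  have hyb_lb : ∀ h : ℝ, Y h ≤ yb h := by
    intro h
    rw [hybInt h]
    have h1 : ∫ s in h..(h+ε), Y h ≤ ∫ s in h..(h+ε), Y s := by
      apply intervalIntegral.integral_mono_on (hle h) intervalIntegrable_const
        (hYc.intervalIntegrable _ _)
      intro s hs; exact hYmono hs.1
    rw [intervalIntegral.integral_const, smul_eq_mul, add_sub_cancel_left] at h1
    calc Y h = (1/ε) * (ε * Y h) := by field_simp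
    _ ≤ (1/ε) * ∫ s in h..(h+ε), Y s := by
        apply mul_le_mul_of_nonneg_left h1 (by positivity)
  have hyb_ub : ∀ h : ℝ, yb h ≤ Y (h+ε) := by
    intro h
    rw [hybInt h]
    have h1 : ∫ s in h..(h+ε), Y s ≤ ∫ s in h..(h+ε), Y (h+ε) := by
      apply intervalIntegral.integral_mono_on (hle h) (hYc.intervalIntegrable _ _)
        intervalIntegrable_const
      intro s hs; exact hYmono hs.2
    rw [intervalIntegral.integral_const, smul_eq_mul, add_sub_cancel_left] at h1
    calc (1/ε) * ∫ s in h..(h+ε), Y s ≤ (1/ε) * (ε * Y (h+ε)) := by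
          apply mul_le_mul_of_nonneg_left h1 (by positivity)
    _ = Y (h+ε) := by field_simp
  have hyb0 : ∀ h : ℝ, 0 ≤ h → 0 ≤ yb h := fun h hh => le_trans (hY0 h hh) (hyb_lb h)
  have hyb1 : ∀ h : ℝ, yb h ≤ 1 := fun h => le_trans (hyb_ub h) (hY1 _)
  have hyb_step : ∀ h : ℝ, yb h ≤ yb (h+ε) := fun h => le_trans (hyb_ub h) (hyb_lb (h+ε))
  -- derivatives
  have hybd : ∀ h : ℝ, HasDerivAt yb ((Y (h+ε) - Y h)/ε) h := by
    intro h
    have h1 : HasDerivAt (fun x : ℝ => P (x + ε)) (Y (h+ε)) h := by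
      have := (hPd (h+ε)).comp h ((hasDerivAt_id h).add_const ε)
      exact (by simpa using this : HasDerivAt (P ∘ fun x => x + ε) (Y (h+ε)) h)
    exact (h1.sub (hPd h)).div_const ε
  have hqbd : ∀ h : ℝ, HasDerivAt qb ((Q (h+ε) - Q h)/ε) h := by
    intro h
    have h1 : HasDerivAt (fun x : ℝ => R (x + ε)) (Q (h+ε)) h := by
      have := (hRd (h+ε)).comp h ((hasDerivAt_id h).add_const ε)
      exact (by simpa using this : HasDerivAt (R ∘ fun x => x + ε) (Q (h+ε)) h)
    exact (h1.sub (hRd h)).div_const ε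
  have hybc : Continuous yb := by
    rw [continuous_iff_continuousAt]; exact fun x => (hybd x).continuousAt
  have hqbc : Continuous qb := by
    rw [continuous_iff_continuousAt]; exact fun x => (hqbd x).continuousAt
  -- constraint for the averaged quantities
  have hqb_con : ∀ h : ℝ, τ ≤ h → h ≤ 1 → qb h ≤ A * h ^ (1-p) * yb (h+ε) ^ p := by
    intro h hτh h1
    have hh0 : 0 < h := lt_of_lt_of_le hτ0 hτh
    have hYnn : 0 ≤ Y (h+ε) := hY0 _ (by linarith)
    have hcc : qb h ≤ A * h ^ (1-p) * Y (h+ε) ^ p := by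
      rw [hqbInt h]
      have h2 : ∫ s in h..(h+ε), Q s ≤ ∫ s in h..(h+ε), (A * h ^ (1-p) * Y (h+ε) ^ p) := by
        apply intervalIntegral.integral_mono_on (hle h) (hQc.intervalIntegrable _ _)
          intervalIntegrable_const
        intro s hs
        calc Q s ≤ A * h ^ (1-p) * Y s ^ p := hcon2 h s hh0 h1 hs.1
        _ ≤ A * h ^ (1-p) * Y (h+ε) ^ p := by
            apply mul_le_mul_of_nonneg_left _ (by positivity)
            exact Real.rpow_le_rpow (hY0 s (by linarith [hs.1])) (hYmono hs.2) hp0.le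
      rw [intervalIntegral.integral_const, smul_eq_mul, add_sub_cancel_left] at h2
      calc (1/ε) * ∫ s in h..(h+ε), Q s ≤ (1/ε) * (ε * (A * h ^ (1-p) * Y (h+ε) ^ p)) := by
            apply mul_le_mul_of_nonneg_left h2 (by positivity)
      _ = A * h ^ (1-p) * Y (h+ε) ^ p := by field_simp
    calc qb h ≤ A * h ^ (1-p) * Y (h+ε) ^ p := hcc
    _ ≤ A * h ^ (1-p) * yb (h+ε) ^ p := by
        apply mul_le_mul_of_nonneg_left _ (by positivity)
        exact Real.rpow_le_rpow hYnn (hyb_lb (h+ε)) hp0.le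
  -- the derivative of the Lyapunov function
  set D : ℝ → ℝ := fun h =>
    ((p-1-γ*p) * h^(p-1-γ*p-1) * qb h + h^(p-1-γ*p) * ((Q (h+ε) - Q h)/ε))
    - γ^(p-1) * ((-(γ*p)) * h^(-(γ*p)-1) * yb h ^ p
        + h^(-(γ*p)) * (((Y (h+ε) - Y h)/ε) * p * yb h ^ (p-1))) with hDdef
  have hΨd : ∀ h ∈ uIcc τ 1, HasDerivAt
      (fun x => x ^ (p-1-γ*p) * qb x - γ^(p-1) * (x ^ (-(γ*p)) * yb x ^ p)) (D h) h := by
    intro h hh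
    rw [uIcc_of_le hτ1] at hh
    have hhpos : 0 < h := lt_of_lt_of_le hτ0 hh.1
    have d1 : HasDerivAt (fun x : ℝ => x ^ (p-1-γ*p)) ((p-1-γ*p) * h^(p-1-γ*p-1)) h :=
      Real.hasDerivAt_rpow_const (Or.inl hhpos.ne')
    have d2 : HasDerivAt (fun x : ℝ => x ^ (-(γ*p))) ((-(γ*p)) * h^(-(γ*p)-1)) h :=
      Real.hasDerivAt_rpow_const (Or.inl hhpos.ne')
    have d4 : HasDerivAt (fun x => yb x ^ p)
        (((Y (h+ε) - Y h)/ε) * p * yb h ^ (p-1)) h :=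
      (hybd h).rpow_const (Or.inr hp.le)
    have dd := ((d1.mul (hqbd h)).sub (((d2.mul d4)).const_mul (γ^(p-1))))
    rw [hDdef]
    exact dd
  have hDc : ContinuousOn D (uIcc τ 1) := by
    intro h hh
    rw [uIcc_of_le hτ1] at hh
    have hhpos : 0 < h := lt_of_lt_of_le hτ0 hh.1
    apply ContinuousAt.continuousWithinAt
    have c1 : ContinuousAt (fun x : ℝ => x ^ (p-1-γ*p-1)) h :=
      Real.continuousAt_rpow_const _ _ (Or.inl hhpos.ne')
    have c2 : ContinuousAt (fun x : ℝ => x ^ (p-1-γ*p)) h :=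
      Real.continuousAt_rpow_const _ _ (Or.inl hhpos.ne')
    have c3 : ContinuousAt (fun x : ℝ => x ^ (-(γ*p)-1)) h :=
      Real.continuousAt_rpow_const _ _ (Or.inl hhpos.ne')
    have c4 : ContinuousAt (fun x : ℝ => x ^ (-(γ*p))) h :=
      Real.continuousAt_rpow_const _ _ (Or.inl hhpos.ne')
    have cyp : Continuous (fun x => yb x ^ p) :=
      hybc.rpow_const (fun x => Or.inr hp0.le)
    have cyp1 : Continuous (fun x => yb x ^ (p-1)) :=
      hybc.rpow_const (fun x => Or.inr (by linarith))
    have cQ : Continuous (fun x : ℝ => (Q (x+ε) - Q x)/ε) :=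
      ((hQc.comp (continuous_id.add continuous_const)).sub hQc).div_const ε
    have cY : Continuous (fun x : ℝ => (Y (x+ε) - Y x)/ε) :=
      ((hYc.comp (continuous_id.add continuous_const)).sub hYc).div_const ε
    rw [hDdef]
    exact (((continuousAt_const.mul c1).mul hqbc.continuousAt).add
        (c2.mul cQ.continuousAt)).sub
      (continuousAt_const.mul (((continuousAt_const.mul c3).mul cyp.continuousAt).add
        (c4.mul ((cY.continuousAt.mul continuousAt_const).mul cyp1.continuousAt))))
  -- pointwise lower bound for D
  have hKnn : 0 ≤ γ^p * τ^(-(γ*p)-1) := by positivity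
  have hDlow : ∀ h ∈ Icc τ 1,
      -((γ^p * τ^(-(γ*p)-1)) * (yb (h+ε) ^ p - yb h ^ p)) ≤ D h := by
    intro h hh
    have hhpos : 0 < h := lt_of_lt_of_le hτ0 hh.1
    have hh1 : h ≤ 1 := hh.2
    have hu0 : 0 ≤ yb h := hyb0 h hhpos.le
    have hv0 : 0 ≤ yb (h+ε) := hyb0 _ (by linarith)
    have hu'0 : 0 ≤ (Y (h+ε) - Y h)/ε :=
      div_nonneg (sub_nonneg.2 (hYmono (hle h))) hε.le
    -- power product identities
    have hM : 0 < h ^ (γ*p+1) := Real.rpow_pos_of_pos hhpos _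
    have m1 : h^(p-1-γ*p-1) * h^(γ*p+1) = h^(p-1) := by
      rw [← Real.rpow_add hhpos]; congr 1; ring
    have m2 : h^(p-1-γ*p) * h^(γ*p+1) = h^p := by
      rw [← Real.rpow_add hhpos]; congr 1; ring
    have m3 : h^(-(γ*p)-1) * h^(γ*p+1) = 1 := by
      rw [← Real.rpow_add hhpos, (by ring : -(γ*p)-1 + (γ*p+1) = 0), Real.rpow_zero]
    have m4 : h^(-(γ*p)) * h^(γ*p+1) = h := by
      rw [← Real.rpow_add hhpos, (by ring : -(γ*p) + (γ*p+1) = 1), Real.rpow_one]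
    have e5 : γ^(p-1) * γ = γ^p := by
      rw [← Real.rpow_add_one hγpos.ne' (p-1), sub_add_cancel]
    have eD : D h * h^(γ*p+1)
        = (p-1-γ*p) * (h^(p-1) * qb h) + h^p * ((Q (h+ε) - Q h)/ε)
          + γ^p * p * yb h ^ p
          - p * (γ^(p-1) * yb h ^ (p-1)) * (h * ((Y (h+ε) - Y h)/ε)) := by
      have hD' : D h = (p-1-γ*p) * h^(p-1-γ*p-1) * qb h + h^(p-1-γ*p) * ((Q (h+ε) - Q h)/ε)
          - γ^(p-1) * ((-(γ*p)) * h^(-(γ*p)-1) * yb h ^ p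
            + h^(-(γ*p)) * (((Y (h+ε) - Y h)/ε) * p * yb h ^ (p-1))) := by rw [hDdef]
      rw [hD']
      linear_combination ((p-1-γ*p) * qb h) * m1 + ((Q (h+ε) - Q h)/ε) * m2
        + (γ^(p-1) * (γ*p) * yb h ^ p) * m3
        - (γ^(p-1) * (((Y (h+ε) - Y h)/ε) * p * yb h ^ (p-1))) * m4
        + (p * yb h ^ p) * e5
    -- ingredient inequalities
    have f1 : ((Y (h+ε) - Y h)/ε) ^ p ≤ (Q (h+ε) - Q h)/ε := by
      have hYd0 : 0 ≤ Y (h+ε) - Y h := by have := hYmono (hle h); linarith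
      rw [Real.div_rpow hYd0 hε.le, div_le_div_iff₀ (Real.rpow_pos_of_pos hε p) hε]
      have h2 := hhold h (h+ε) (hle h)
      rw [add_sub_cancel_left] at h2
      calc (Y (h+ε) - Y h)^p * ε ≤ (ε^(p-1) * (Q (h+ε) - Q h)) * ε := by
            apply mul_le_mul_of_nonneg_right h2 hε.le
      _ = (Q (h+ε) - Q h) * (ε^(p-1) * ε) := by ring
      _ = (Q (h+ε) - Q h) * ε^p := by
            rw [← Real.rpow_add_one hε.ne' (p-1), sub_add_cancel]
    have f2 : qb h ≤ A * h ^ (1-p) * yb (h+ε) ^ p := hqb_con h hh.1 hh1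
    have f3 := young_rpow hp (mul_nonneg hhpos.le hu'0) (mul_nonneg hγpos.le hu0)
    rw [Real.mul_rpow hγpos.le hu0, Real.mul_rpow hγpos.le hu0,
      Real.mul_rpow hhpos.le hu'0] at f3
    -- f3 : p * (γ^(p-1) * yb h^(p-1)) * (h * u') ≤ h^p * u'^p + (p-1) * (γ^p * yb h^p)
    have e4 : h^(p-1) * h^(1-p) = 1 := by
      rw [← Real.rpow_add hhpos, (by ring : p-1 + (1-p) = 0), Real.rpow_zero]
    have e7 : (p-1-γ*p) * A = -γ^p := by rw [hroot]; ring
    have t2 : (p-1-γ*p) * (h^(p-1) * (A * h^(1-p) * yb (h+ε) ^ p))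
        ≤ (p-1-γ*p) * (h^(p-1) * qb h) := by
      apply mul_le_mul_of_nonpos_left _ (by linarith : p-1-γ*p ≤ 0)
      exact mul_le_mul_of_nonneg_left f2 (Real.rpow_nonneg hhpos.le _)
    have t3 : h^(p-1) * (A * h^(1-p) * yb (h+ε) ^ p)
        = A * yb (h+ε) ^ p := by
      calc h^(p-1) * (A * h^(1-p) * yb (h+ε) ^ p)
          = A * (h^(p-1) * h^(1-p)) * yb (h+ε) ^ p := by ring
      _ = A * yb (h+ε) ^ p := by rw [e4]; ring
    have c1' : -(γ^p * yb (h+ε) ^ p) ≤ (p-1-γ*p) * (h^(p-1) * qb h) := by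
      calc -(γ^p * yb (h+ε) ^ p) = ((p-1-γ*p) * A) * yb (h+ε) ^ p := by rw [e7]; ring
      _ = (p-1-γ*p) * (h^(p-1) * (A * h^(1-p) * yb (h+ε) ^ p)) := by rw [t3]; ring
      _ ≤ (p-1-γ*p) * (h^(p-1) * qb h) := t2
    have t4 : h^p * ((Y (h+ε) - Y h)/ε)^p ≤ h^p * ((Q (h+ε) - Q h)/ε) :=
      mul_le_mul_of_nonneg_left f1 (Real.rpow_nonneg hhpos.le p)
    have S1 : γ^p * yb h ^ p - γ^p * yb (h+ε) ^ p ≤ D h * h^(γ*p+1) := by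
      rw [eD]
      linarith [c1', t4, f3]
    -- divide by h^(γ*p+1)
    have hδ0 : 0 ≤ yb (h+ε) ^ p - yb h ^ p := by
      have := Real.rpow_le_rpow hu0 (hyb_step h) hp0.le
      linarith
    have h9 : -(γ^p * (yb (h+ε) ^ p - yb h ^ p)) * (h^(γ*p+1))⁻¹ ≤ D h := by
      rw [← div_eq_mul_inv, div_le_iff₀ hM]
      linarith [S1]
    have h10 : (h^(γ*p+1))⁻¹ ≤ τ^(-(γ*p)-1) := by
      have hcmp : h^(-(γ*p)-1) ≤ τ^(-(γ*p)-1) :=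
        Real.rpow_le_rpow_of_nonpos hτ0 hh.1
          (by nlinarith [mul_pos hγpos hp0] : -(γ*p)-1 ≤ 0)
      have e : (h^(γ*p+1))⁻¹ = h^(-(γ*p)-1) := by
        rw [(by ring : -(γ*p)-1 = -(γ*p+1)), Real.rpow_neg hhpos.le]
      rw [e]; exact hcmp
    calc -((γ^p * τ^(-(γ*p)-1)) * (yb (h+ε) ^ p - yb h ^ p))
        ≤ -((γ^p * (h^(γ*p+1))⁻¹) * (yb (h+ε) ^ p - yb h ^ p)) := by
          have hmul := mul_le_mul_of_nonneg_left h10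
            (mul_nonneg (Real.rpow_nonneg hγpos.le p) hδ0)
          nlinarith [hmul]
    _ = -(γ^p * (yb (h+ε) ^ p - yb h ^ p)) * (h^(γ*p+1))⁻¹ := by ring
    _ ≤ D h := h9
  -- FTC and integration of the bound
  have hDint : IntervalIntegrable D volume τ 1 := hDc.intervalIntegrable
  have hFTC := intervalIntegral.integral_eq_sub_of_hasDerivAt hΨd hDint
  have hFTC' : ∫ h in τ..1, D h
      = (1:ℝ)^(p-1-γ*p) * qb 1 - γ^(p-1) * ((1:ℝ)^(-(γ*p)) * yb 1 ^ p)
        - (τ^(p-1-γ*p) * qb τ - γ^(p-1) * (τ^(-(γ*p)) * yb τ ^ p)) := hFTC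
  rw [Real.one_rpow, Real.one_rpow, one_mul, one_mul] at hFTC'
  set F : ℝ → ℝ := fun t => yb t ^ p with hFdef
  have hFc : Continuous F := hybc.rpow_const (fun x => Or.inr hp0.le)
  have hFec : Continuous (fun h : ℝ => F (h+ε)) := hFc.comp (continuous_id.add continuous_const)
  have hlhs_int : IntervalIntegrable
      (fun h => -((γ^p * τ^(-(γ*p)-1)) * (F (h+ε) - F h))) volume τ 1 :=
    ((continuous_const.mul (hFec.sub hFc)).neg).intervalIntegrable _ _
  have hmono : (∫ h in τ..1, -((γ^p * τ^(-(γ*p)-1)) * (F (h+ε) - F h)))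
      ≤ ∫ h in τ..1, D h := by
    apply intervalIntegral.integral_mono_on hτ1 hlhs_int hDint
    intro x hx
    simpa [hFdef] using hDlow x hx
  have hsplit : (∫ h in τ..1, (F (h+ε) - F h))
      = (∫ h in (1:ℝ)..(1+ε), F h) - ∫ h in τ..(τ+ε), F h := by
    have i1 : (∫ h in τ..1, F (h+ε)) = ∫ h in (τ+ε)..(1+ε), F h :=
      intervalIntegral.integral_comp_add_right F ε
    rw [intervalIntegral.integral_sub (hFec.intervalIntegrable _ _)
      (hFc.intervalIntegrable _ _), i1]
    have c1 : (∫ h in τ..(τ+ε), F h) + ∫ h in (τ+ε)..(1+ε), F h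
        = ∫ h in τ..(1+ε), F h :=
      intervalIntegral.integral_add_adjacent_intervals (hFc.intervalIntegrable _ _)
        (hFc.intervalIntegrable _ _)
    have c2 : (∫ h in τ..(1:ℝ), F h) + ∫ h in (1:ℝ)..(1+ε), F h
        = ∫ h in τ..(1+ε), F h :=
      intervalIntegral.integral_add_adjacent_intervals (hFc.intervalIntegrable _ _)
        (hFc.intervalIntegrable _ _)
    linarith
  have hF0 : 0 ≤ ∫ h in τ..(τ+ε), F h := by
    apply intervalIntegral.integral_nonneg (by linarith)
    intro s hs
    exact Real.rpow_nonneg (hyb0 s (by linarith [hs.1])) p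
  have hF1 : (∫ h in (1:ℝ)..(1+ε), F h) ≤ ε := by
    have h1 : (∫ h in (1:ℝ)..(1+ε), F h) ≤ ∫ _h in (1:ℝ)..(1+ε), (1:ℝ) := by
      apply intervalIntegral.integral_mono_on (by linarith) (hFc.intervalIntegrable _ _)
        intervalIntegrable_const
      intro s hs
      exact Real.rpow_le_one (hyb0 s (by linarith [hs.1])) (hyb1 s) hp0.le
    rw [intervalIntegral.integral_const, smul_eq_mul] at h1
    calc (∫ h in (1:ℝ)..(1+ε), F h) ≤ (1 + ε - 1) * 1 := h1
    _ = ε := by ring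
  have hLHS : (∫ h in τ..1, -((γ^p * τ^(-(γ*p)-1)) * (F (h+ε) - F h)))
      = -((γ^p * τ^(-(γ*p)-1)) * ((∫ h in (1:ℝ)..(1+ε), F h) - ∫ h in τ..(τ+ε), F h)) := by
    rw [intervalIntegral.integral_neg, intervalIntegral.integral_const_mul, hsplit]
  have hfin : -((γ^p * τ^(-(γ*p)-1)) * ε)
      ≤ (qb 1 - γ^(p-1) * (yb 1 ^ p)) - (τ^(p-1-γ*p) * qb τ - γ^(p-1) * (τ^(-(γ*p)) * yb τ ^ p)) := by
    rw [← hFTC']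
    calc -((γ^p * τ^(-(γ*p)-1)) * ε)
        ≤ -((γ^p * τ^(-(γ*p)-1)) * ((∫ h in (1:ℝ)..(1+ε), F h) - ∫ h in τ..(τ+ε), F h)) := by
          have h2 : (∫ h in (1:ℝ)..(1+ε), F h) - (∫ h in τ..(τ+ε), F h) ≤ ε := by linarith
          nlinarith [hKnn, h2]
    _ = ∫ h in τ..1, -((γ^p * τ^(-(γ*p)-1)) * (F (h+ε) - F h)) := hLHS.symm
    _ ≤ ∫ h in τ..1, D h := hmono
  have goal' : τ^(p-1-γ*p) * qb τ - γ^(p-1) * (τ^(-(γ*p)) * yb τ ^ p)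
      ≤ qb 1 - γ^(p-1) * (yb 1 ^ p) + (γ^p * τ^(-(γ*p)-1)) * ε := by linarith
  simpa only [hybdef, hqbdef] using goal'

lemma core (A p γ : ℝ) (hA : 1 < A) (hp : 1 < p)
    (hγpos : 0 < γ) (hγ1 : γ < 1) (hb : 0 < 1 - p + p * γ)
    (hroot : γ ^ p = A * (1 - p + p * γ))
    (α : ℝ → ℝ) (hαm : Measurable α) (hα0 : ∀ s, 0 ≤ α s)
    (hsupp : ∀ s, s ∉ Ioo (0:ℝ) 1 → α s = 0)
    (hαp_int : Integrable (fun s => α s ^ p) volume)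
    (hQ1 : ∫ s in (0:ℝ)..1, α s ^ p ≤ 1)
    (hcon : ∀ h, h ∈ Ioc (0:ℝ) 1 →
      (∫ s in (0:ℝ)..h, α s ^ p) ≤ A * h ^ (1 - p) * (∫ s in (0:ℝ)..h, α s) ^ p)
    (τ : ℝ) (hτ0 : 0 < τ) (hτ1 : τ ≤ 1) :
    ∫ s in (0:ℝ)..τ, α s ≤ ((1 - γ ^ (p-1))⁻¹) ^ (1/p) * τ ^ γ := by
  have hp0 : (0:ℝ) < p := by linarith
  have hA0 : (0:ℝ) < A := by linarith
  -- global integrability of α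
  have hαint : Integrable α volume := by
    have hmaj : Integrable ((Ioo (0:ℝ) 1).indicator (fun s => 1 + α s ^ p)) volume := by
      apply MeasureTheory.IntegrableOn.integrable_indicator _ measurableSet_Ioo
      exact (integrableOn_const (by simp [Real.volume_Ioo])).add hαp_int.integrableOn
    apply Integrable.mono' hmaj hαm.aestronglyMeasurable
    apply ae_of_all
    intro s
    rw [Real.norm_eq_abs, abs_of_nonneg (hα0 s)]
    by_cases hs : s ∈ Ioo (0:ℝ) 1
    · rw [indicator_of_mem hs]
      rcases le_or_gt (α s) 1 with h1 | h1
      · have := Real.rpow_nonneg (hα0 s) p; linarith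
      · calc α s = α s ^ (1:ℝ) := (Real.rpow_one _).symm
        _ ≤ α s ^ p := Real.rpow_le_rpow_of_exponent_le h1.le hp.le
        _ ≤ 1 + α s ^ p := by linarith
    · rw [indicator_of_notMem hs, hsupp s hs]
  have hsuppp : ∀ s, s ∉ Ioo (0:ℝ) 1 → α s ^ p = 0 := by
    intro s hs; rw [hsupp s hs, Real.zero_rpow hp0.ne']
  set Y : ℝ → ℝ := fun h => ∫ s in (0:ℝ)..h, α s with hYdef
  set Q : ℝ → ℝ := fun h => ∫ s in (0:ℝ)..h, α s ^ p with hQdef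
  have hYc : Continuous Y :=
    intervalIntegral.continuous_primitive (fun a b => hαint.intervalIntegrable) 0
  have hQc : Continuous Q :=
    intervalIntegral.continuous_primitive (fun a b => hαp_int.intervalIntegrable) 0
  have hYsub : ∀ a b : ℝ, Y b - Y a = ∫ s in a..b, α s := by
    intro a b
    simp only [hYdef]
    exact intervalIntegral.integral_interval_sub_left hαint.intervalIntegrable
      hαint.intervalIntegrable
  have hQsub : ∀ a b : ℝ, Q b - Q a = ∫ s in a..b, α s ^ p := by
    intro a b
    simp only [hQdef]
    exact intervalIntegral.integral_interval_sub_left hαp_int.intervalIntegrable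
      hαp_int.intervalIntegrable
  have hYmono : Monotone Y := by
    intro a b hab
    have h0 : 0 ≤ ∫ s in a..b, α s := intervalIntegral.integral_nonneg hab (fun s _ => hα0 s)
    have := hYsub a b; linarith
  have hQmono : Monotone Q := by
    intro a b hab
    have h0 : 0 ≤ ∫ s in a..b, α s ^ p :=
      intervalIntegral.integral_nonneg hab (fun s _ => Real.rpow_nonneg (hα0 s) p)
    have := hQsub a b; linarith
  have hY0 : ∀ h : ℝ, 0 ≤ h → 0 ≤ Y h :=
    fun h hh => intervalIntegral.integral_nonneg hh (fun s _ => hα0 s)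
  have hQ0 : ∀ h : ℝ, 0 ≤ h → 0 ≤ Q h :=
    fun h hh => intervalIntegral.integral_nonneg hh (fun s _ => Real.rpow_nonneg (hα0 s) p)
  have hstopY : ∀ t : ℝ, 1 ≤ t → Y t = Y 1 := by
    intro t ht
    have hz : (∫ s in (1:ℝ)..t, α s) = 0 := by
      rw [intervalIntegral.integral_congr (g := fun _ => (0:ℝ))]
      · simp
      · intro s hs
        rw [uIcc_of_le ht, mem_Icc] at hs
        exact hsupp s (fun hmem => absurd hmem.2 (by linarith [hs.1]))
    have := hYsub 1 t; linarith
  have hstopQ : ∀ t : ℝ, 1 ≤ t → Q t = Q 1 := by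
    intro t ht
    have hz : (∫ s in (1:ℝ)..t, α s ^ p) = 0 := by
      rw [intervalIntegral.integral_congr (g := fun _ => (0:ℝ))]
      · simp
      · intro s hs
        rw [uIcc_of_le ht, mem_Icc] at hs
        exact hsuppp s (fun hmem => absurd hmem.2 (by linarith [hs.1]))
    have := hQsub 1 t; linarith
  have hhold : ∀ a b : ℝ, a ≤ b → (Y b - Y a) ^ p ≤ (b - a) ^ (p-1) * (Q b - Q a) := by
    intro a b hab
    rw [hYsub, hQsub]
    exact holder_rpow hp hα0 hab hαint.integrableOn hαp_int.integrableOn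
  have hY1top : Y 1 ≤ 1 := by
    have h1 := hhold 0 1 zero_le_one
    have hY00 : Y 0 = 0 := by simp [hYdef]
    have hQ00 : Q 0 = 0 := by simp [hQdef]
    rw [hY00, hQ00, sub_zero, sub_zero, sub_zero, Real.one_rpow, one_mul] at h1
    by_contra hc
    push_neg at hc
    have h2 : 1 < Y 1 ^ p := Real.one_lt_rpow_iff (hY0 1 zero_le_one) |>.2 (Or.inl ⟨hc, hp0⟩)
    have h3 : Q 1 ≤ 1 := hQ1
    linarith
  have hY1 : ∀ h : ℝ, Y h ≤ 1 := by
    intro h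
    rcases le_or_gt h 1 with hh | hh
    · exact le_trans (hYmono hh) hY1top
    · rw [hstopY h hh.le]; exact hY1top
  have hcon2 : ∀ u t : ℝ, 0 < u → u ≤ 1 → u ≤ t → Q t ≤ A * u ^ (1-p) * Y t ^ p := by
    intro u t hu hu1 hut
    have hu1p : (1:ℝ) ≤ u ^ (1-p) := by
      have h1 := Real.rpow_le_rpow_of_nonpos hu hu1 (by linarith : (1:ℝ) - p ≤ 0)
      rwa [Real.one_rpow] at h1
    have hYtp : 0 ≤ Y t ^ p := Real.rpow_nonneg (hY0 t (by linarith)) p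
    rcases le_or_gt t 1 with ht | ht
    · have h1 := hcon t ⟨lt_of_lt_of_le hu hut, ht⟩
      have h2 : t ^ (1-p) ≤ u ^ (1-p) := Real.rpow_le_rpow_of_nonpos hu hut (by linarith)
      calc Q t ≤ A * t ^ (1-p) * Y t ^ p := h1
      _ ≤ A * u ^ (1-p) * Y t ^ p := by
          nlinarith [mul_nonneg (mul_nonneg hA0.le hYtp) (sub_nonneg.2 h2)]
    · have h1 := hcon 1 ⟨one_pos, le_refl 1⟩
      rw [Real.one_rpow, mul_one] at h1
      have hYY : Y 1 = Y t := (hstopY t ht.le).symm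
      calc Q t = Q 1 := hstopQ t ht.le
      _ ≤ A * Y 1 ^ p := h1
      _ = A * Y t ^ p := by rw [hYY]
      _ ≤ A * u ^ (1-p) * Y t ^ p := by
          nlinarith [mul_nonneg (mul_nonneg hA0.le hYtp) (sub_nonneg.2 hu1p)]
  -- primitives of Y and Q
  set P : ℝ → ℝ := fun t => ∫ s in (0:ℝ)..t, Y s with hPdef
  set R : ℝ → ℝ := fun t => ∫ s in (0:ℝ)..t, Q s with hRdef
  have hPd : ∀ x, HasDerivAt P (Y x) x := fun x =>
    intervalIntegral.integral_hasDerivAt_right (hYc.intervalIntegrable _ _)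
      hYc.stronglyMeasurable.stronglyMeasurableAtFilter hYc.continuousAt
  have hRd : ∀ x, HasDerivAt R (Q x) x := fun x =>
    intervalIntegral.integral_hasDerivAt_right (hQc.intervalIntegrable _ _)
      hQc.stronglyMeasurable.stronglyMeasurableAtFilter hQc.continuousAt
  have hPsub : ∀ a b : ℝ, P b - P a = ∫ s in a..b, Y s := by
    intro a b
    simp only [hPdef]
    exact intervalIntegral.integral_interval_sub_left (hYc.intervalIntegrable _ _)
      (hYc.intervalIntegrable _ _)
  have hRsub : ∀ a b : ℝ, R b - R a = ∫ s in a..b, Q s := by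
    intro a b
    simp only [hRdef]
    exact intervalIntegral.integral_interval_sub_left (hQc.intervalIntegrable _ _)
      (hQc.intervalIntegrable _ _)
  -- the one-scale inequality, for every ε > 0
  have main : ∀ ε : ℝ, 0 < ε →
      τ ^ (p-1-γ*p) * ((R (τ+ε) - R τ)/ε)
        - γ^(p-1) * (τ ^ (-(γ*p)) * (((P (τ+ε) - P τ)/ε) ^ p))
      ≤ (R (1+ε) - R 1)/ε - γ^(p-1) * (((P (1+ε) - P 1)/ε) ^ p)
        + (γ^p * τ^(-(γ*p)-1)) * ε :=
    fun ε hε => eps_step A p γ hA hp hγpos hb hroot Y Q P R hYc hQc hYmono hY0 hY1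
      hPd hRd hPsub hRsub hhold hcon2 τ hτ0 hτ1 ε hε
  -- pass to the limit ε → 0⁺
  have slope_lim : ∀ (G g : ℝ → ℝ), (∀ x, HasDerivAt G (g x) x) → ∀ h : ℝ,
      Tendsto (fun ε => (G (h+ε) - G h)/ε) (𝓝[>] (0:ℝ)) (𝓝 (g h)) := by
    intro G g hG h
    have h1 : Tendsto (slope G h) (𝓝[≠] h) (𝓝 (g h)) :=
      hasDerivAt_iff_tendsto_slope.1 (hG h)
    have h2 : Tendsto (fun ε : ℝ => h + ε) (𝓝[>] (0:ℝ)) (𝓝[≠] h) := by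
      apply tendsto_nhdsWithin_of_tendsto_nhds_of_eventually_within
      · have h3 : Tendsto (fun ε : ℝ => h + ε) (𝓝 0) (𝓝 (h + 0)) :=
          (continuous_const.add continuous_id).tendsto (0:ℝ)
        rw [add_zero] at h3
        exact h3.mono_left nhdsWithin_le_nhds
      · filter_upwards [self_mem_nhdsWithin] with ε hε
        have hε' : (0:ℝ) < ε := hε
        simp only [mem_compl_iff, mem_singleton_iff]
        intro hc
        have : ε = 0 := by linarith [congrArg (fun x => x - h) hc]
        linarith
    have h3 := h1.comp h2
    apply h3.congr
    intro ε
    simp only [Function.comp_apply, slope_def_field, add_sub_cancel_left]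
  have limyτ := slope_lim P Y hPd τ
  have limqτ := slope_lim R Q hRd τ
  have limy1 := slope_lim P Y hPd 1
  have limq1 := slope_lim R Q hRd 1
  have hΨ : τ ^ (p-1-γ*p) * Q τ - γ^(p-1) * (τ ^ (-(γ*p)) * Y τ ^ p)
      ≤ Q 1 - γ^(p-1) * (Y 1 ^ p) := by
    have L1 : Tendsto (fun ε => τ ^ (p-1-γ*p) * ((R (τ+ε) - R τ)/ε)
        - γ^(p-1) * (τ ^ (-(γ*p)) * (((P (τ+ε) - P τ)/ε) ^ p))) (𝓝[>] (0:ℝ))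
        (𝓝 (τ ^ (p-1-γ*p) * Q τ - γ^(p-1) * (τ ^ (-(γ*p)) * Y τ ^ p))) := by
      exact (tendsto_const_nhds.mul limqτ).sub
        (tendsto_const_nhds.mul (tendsto_const_nhds.mul
          (limyτ.rpow_const (Or.inr hp0.le))))
    have L2 : Tendsto (fun ε => (R (1+ε) - R 1)/ε - γ^(p-1) * (((P (1+ε) - P 1)/ε) ^ p)
        + (γ^p * τ^(-(γ*p)-1)) * ε) (𝓝[>] (0:ℝ))
        (𝓝 (Q 1 - γ^(p-1) * (Y 1 ^ p))) := by
      have l3 : Tendsto (fun ε : ℝ => (γ^p * τ^(-(γ*p)-1)) * ε) (𝓝[>] (0:ℝ))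
          (𝓝 ((γ^p * τ^(-(γ*p)-1)) * 0)) := by
        exact (tendsto_const_nhds.mul tendsto_id).mono_left nhdsWithin_le_nhds
      rw [mul_zero] at l3
      have l4 : Tendsto (fun ε => (R (1+ε) - R 1)/ε - γ^(p-1) * (((P (1+ε) - P 1)/ε) ^ p)
          + (γ^p * τ^(-(γ*p)-1)) * ε) (𝓝[>] (0:ℝ))
          (𝓝 (Q 1 - γ^(p-1) * (Y 1 ^ p) + 0)) :=
        (limq1.sub (tendsto_const_nhds.mul (limy1.rpow_const (Or.inr hp0.le)))).add l3
      rwa [add_zero] at l4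
    exact le_of_tendsto_of_tendsto L1 L2
      (by filter_upwards [self_mem_nhdsWithin] with ε hε using main ε hε)
  -- endgame
  have hYτ0 : 0 ≤ Y τ := hY0 τ hτ0.le
  have hHold : Y τ ^ p ≤ τ^(p-1) * Q τ := by
    have h1 := hhold 0 τ hτ0.le
    have hY00 : Y 0 = 0 := by simp [hYdef]
    have hQ00 : Q 0 = 0 := by simp [hQdef]
    rw [hY00, hQ00, sub_zero, sub_zero, sub_zero] at h1
    exact h1
  have hcγ : γ^(p-1) < 1 := Real.rpow_lt_one hγpos.le hγ1 (by linarith)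
  have hcγ0 : 0 ≤ γ^(p-1) := Real.rpow_nonneg hγpos.le _
  have key1 : (1 - γ^(p-1)) * (τ^(-(γ*p)) * Y τ ^ p) ≤ 1 := by
    have k0 : τ^(-(γ*p)) * Y τ ^ p ≤ τ^(p-1-γ*p) * Q τ := by
      have e : τ^(p-1-γ*p) = τ^(-(γ*p)) * τ^(p-1) := by
        rw [← Real.rpow_add hτ0]; congr 1; ring
      calc τ^(-(γ*p)) * Y τ ^ p ≤ τ^(-(γ*p)) * (τ^(p-1) * Q τ) :=
            mul_le_mul_of_nonneg_left hHold (Real.rpow_nonneg hτ0.le _)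
      _ = τ^(p-1-γ*p) * Q τ := by rw [e]; ring
    have k2 : 0 ≤ γ^(p-1) * Y 1 ^ p :=
      mul_nonneg hcγ0 (Real.rpow_nonneg (hY0 1 zero_le_one) p)
    have k3 : Q 1 ≤ 1 := hQ1
    linarith [hΨ, k0]
  have key2 : Y τ ^ p ≤ τ^(γ*p) * (1 - γ^(p-1))⁻¹ := by
    have hpos1 : 0 < 1 - γ^(p-1) := by linarith
    have e0 : τ^(γ*p) * τ^(-(γ*p)) = 1 := by
      rw [← Real.rpow_add hτ0]; simp
    have k4 : τ^(-(γ*p)) * Y τ ^ p ≤ (1 - γ^(p-1))⁻¹ := by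
      rw [← one_div]
      rw [le_div_iff₀ hpos1]
      nlinarith [key1]
    calc Y τ ^ p = τ^(γ*p) * (τ^(-(γ*p)) * Y τ ^ p) := by
          rw [← mul_assoc, e0, one_mul]
    _ ≤ τ^(γ*p) * (1 - γ^(p-1))⁻¹ :=
        mul_le_mul_of_nonneg_left k4 (Real.rpow_nonneg hτ0.le _)
  have hfinal : Y τ ≤ ((1 - γ^(p-1))⁻¹) ^ (1/p) * τ^γ := by
    have hpos1 : 0 < 1 - γ^(p-1) := by linarith
    have h1 : Y τ = (Y τ ^ p) ^ (1/p) := by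
      rw [← Real.rpow_mul hYτ0, mul_one_div_cancel hp0.ne', Real.rpow_one]
    rw [h1]
    calc (Y τ ^ p) ^ (1/p) ≤ (τ^(γ*p) * (1 - γ^(p-1))⁻¹) ^ (1/p) :=
          Real.rpow_le_rpow (Real.rpow_nonneg hYτ0 p) key2 (by positivity)
    _ = ((1 - γ^(p-1))⁻¹) ^ (1/p) * τ^γ := by
        rw [Real.mul_rpow (Real.rpow_nonneg hτ0.le _) (by positivity),
          ← Real.rpow_mul hτ0.le, (by field_simp : γ*p*(1/p) = γ)]
        ring
  exact hfinal

/-- there is `C = C(A,p) > 0` with `ξ(τ) ≤ C τ^γ` for all `τ ∈ [0,1]`,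
where `γ` is the smallest root of `φ(s) = s^p - A(1-p+ps)`. -/
theorem xi_power_bound (A p : ℝ) (hA : 1 < A) (hp : 1 < p)
    [Fact (1 ≤ ENNReal.ofReal p)]
    (γ : ℝ) (hγ0 : 0 ≤ γ)
    (hγroot : γ ^ p - A * (1 - p + p * γ) = 0)
    (hγmin : ∀ s : ℝ, 0 ≤ s → s ^ p - A * (1 - p + p * s) = 0 → γ ≤ s) :
    ∃ C > (0:ℝ), ∀ τ ∈ Icc (0:ℝ) 1, xiFn A p τ ≤ C * τ ^ γ := by
  have hp0 : (0:ℝ) < p := by linarith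
  have hroot : γ ^ p = A * (1 - p + p * γ) := by linarith
  -- γ is strictly between 1 - 1/p and 1
  have hb : 0 < 1 - p + p * γ := by
    rcases lt_or_ge 0 (1 - p + p * γ) with h | hle
    · exact h
    · exfalso
      have h1 : γ ^ p ≤ 0 := by nlinarith
      have h2 : 0 ≤ γ ^ p := Real.rpow_nonneg hγ0 p
      have h4 : γ = 0 := by
        by_contra hne
        exact absurd (le_antisymm h1 h2)
          (Real.rpow_pos_of_pos (lt_of_le_of_ne hγ0 (Ne.symm hne)) p).ne'
      rw [h4, Real.zero_rpow hp0.ne'] at hroot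
      nlinarith
  have hγpos : 0 < γ := by
    rcases lt_or_ge 0 γ with h | h
    · exact h
    · exfalso
      nlinarith [mul_nonneg hp0.le (neg_nonneg.2 h)]
  have hγ1 : γ < 1 := by
    have hx0 : (0:ℝ) < 1 - 1/p := by
      have h1 : 1/p < 1 := by rw [div_lt_one hp0]; exact hp
      linarith
    have hc : ContinuousOn (fun s : ℝ => s ^ p - A * (1 - p + p * s)) (Icc (1 - 1/p) 1) := by
      intro x hx
      have hxpos : 0 < x := lt_of_lt_of_le hx0 hx.1
      apply ContinuousAt.continuousWithinAt
      exact (Real.continuousAt_rpow_const x p (Or.inl hxpos.ne')).sub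
        (continuousAt_const.mul (continuousAt_const.add (continuousAt_const.mul continuousAt_id)))
    have hf1 : (fun s : ℝ => s ^ p - A * (1 - p + p * s)) 1 = 1 - A := by
      simp only [Real.one_rpow, mul_one]; ring
    have hfx0 : (fun s : ℝ => s ^ p - A * (1 - p + p * s)) (1 - 1/p) = (1 - 1/p) ^ p := by
      simp only []
      have he : 1 - p + p * (1 - 1/p) = 0 := by field_simp; ring
      rw [he, mul_zero, sub_zero]
    have hmem : (0:ℝ) ∈ Icc ((fun s : ℝ => s ^ p - A * (1 - p + p * s)) 1)
        ((fun s : ℝ => s ^ p - A * (1 - p + p * s)) (1 - 1/p)) := by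
      constructor
      · rw [hf1]; linarith
      · rw [hfx0]; positivity
    have h1p : (0:ℝ) < 1/p := by positivity
    obtain ⟨s0, hs0mem, hs0⟩ := intermediate_value_Icc' (by linarith : 1 - 1/p ≤ 1) hc hmem
    have hγles0 : γ ≤ s0 := hγmin s0 (by linarith [hs0mem.1]) hs0
    have hs0lt1 : s0 < 1 := by
      rcases lt_or_eq_of_le hs0mem.2 with h | h
      · exact h
      · exfalso
        rw [h] at hs0
        rw [hf1] at hs0
        linarith
    linarith
  have hcγ : γ^(p-1) < 1 := Real.rpow_lt_one hγpos.le hγ1 (by linarith)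
  have hCpos : 0 < ((1 - γ ^ (p-1))⁻¹) ^ (1/p) :=
    Real.rpow_pos_of_pos (inv_pos.2 (by linarith)) _
  refine ⟨((1 - γ ^ (p-1))⁻¹) ^ (1/p), hCpos, ?_⟩
  intro τ hτ
  have hRHS0 : 0 ≤ ((1 - γ ^ (p-1))⁻¹) ^ (1/p) * τ ^ γ :=
    mul_nonneg hCpos.le (Real.rpow_nonneg hτ.1 γ)
  unfold xiFn
  apply Real.sSup_le _ hRHS0
  rintro x ⟨f, hfE, rfl⟩
  have hshow : ((fun f : Lp ℝ (ENNReal.ofReal p) mu01 => ∫ s in (0:ℝ)..τ, f s) f)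
      = ∫ s in (0:ℝ)..τ, f s := rfl
  rw [hshow]
  rcases eq_or_lt_of_le hτ.1 with htz | hτpos
  · rw [← htz, intervalIntegral.integral_same, Real.zero_rpow hγpos.ne', mul_zero]
  obtain ⟨hf0, hfnorm, hfcon⟩ := hfE
  have hmu : mu01 = volume.restrict (Ioo (0:ℝ) 1) := rfl
  set α : ℝ → ℝ := (Ioo (0:ℝ) 1).indicator (fun s => max (f s) 0) with hα
  have hαm : Measurable α :=
    ((Lp.stronglyMeasurable f).measurable.max measurable_const).indicator measurableSet_Ioo
  have hα0 : ∀ s, 0 ≤ α s := by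
    intro s
    by_cases h : s ∈ Ioo (0:ℝ) 1
    · rw [hα, indicator_of_mem h]; exact le_max_right _ _
    · rw [hα, indicator_of_notMem h]
  have hsupp : ∀ s, s ∉ Ioo (0:ℝ) 1 → α s = 0 := by
    intro s hs; rw [hα, indicator_of_notMem hs]
  have haefμ : ∀ᵐ s ∂mu01, α s = f s := by
    have h1 : ∀ᵐ s ∂mu01, s ∈ Ioo (0:ℝ) 1 := by
      rw [hmu]; exact ae_restrict_mem measurableSet_Ioo
    filter_upwards [h1, hf0] with s hs hfs
    rw [hα, indicator_of_mem hs]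
    exact max_eq_left hfs
  have hne1 : ∀ᵐ s : ℝ ∂volume, s ≠ 1 := by
    rw [MeasureTheory.ae_iff]
    simp only [ne_eq, not_not, setOf_eq_eq_singleton]
    exact measure_singleton 1
  have himp : ∀ᵐ s : ℝ ∂volume, s ∈ Ioo (0:ℝ) 1 → α s = f s :=
    (ae_restrict_iff' measurableSet_Ioo).1 haefμ
  have hint_eq : ∀ t : ℝ, 0 ≤ t → t ≤ 1 →
      (∫ s in (0:ℝ)..t, f s) = ∫ s in (0:ℝ)..t, α s := by
    intro t h0 h1
    rw [intervalIntegral.integral_of_le h0, intervalIntegral.integral_of_le h0]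
    apply setIntegral_congr_ae measurableSet_Ioc
    filter_upwards [himp, hne1] with s hs hne hmem
    exact (hs ⟨hmem.1, lt_of_le_of_ne (le_trans hmem.2 h1) hne⟩).symm
  have hintp_eq : ∀ t : ℝ, 0 ≤ t → t ≤ 1 →
      (∫ s in (0:ℝ)..t, f s ^ p) = ∫ s in (0:ℝ)..t, α s ^ p := by
    intro t h0 h1
    rw [intervalIntegral.integral_of_le h0, intervalIntegral.integral_of_le h0]
    apply setIntegral_congr_ae measurableSet_Ioc
    filter_upwards [himp, hne1] with s hs hne hmem
    rw [hs ⟨hmem.1, lt_of_le_of_ne (le_trans hmem.2 h1) hne⟩]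
  -- integrability
  have hmemf : MemLp f (ENNReal.ofReal p) mu01 := Lp.memLp f
  have hpne0 : ENNReal.ofReal p ≠ 0 := (ENNReal.ofReal_pos.2 hp0).ne'
  have hi1 : Integrable (fun s => ‖f s‖ ^ p) mu01 := by
    have h2 := hmemf.integrable_norm_rpow hpne0 ENNReal.ofReal_ne_top
    simpa [ENNReal.toReal_ofReal hp0.le] using h2
  have hαp_mu : Integrable (fun s => α s ^ p) mu01 := by
    apply hi1.congr
    filter_upwards [haefμ, hf0] with s hs hfs
    rw [Real.norm_eq_abs, abs_of_nonneg hfs, ← hs]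
  have hαp_int : Integrable (fun s => α s ^ p) volume := by
    have heq : (fun s => α s ^ p) = (Ioo (0:ℝ) 1).indicator (fun s => α s ^ p) := by
      funext s
      by_cases h : s ∈ Ioo (0:ℝ) 1
      · rw [indicator_of_mem h]
      · rw [indicator_of_notMem h, hsupp s h, Real.zero_rpow hp0.ne']
    rw [heq]
    apply MeasureTheory.IntegrableOn.integrable_indicator _ measurableSet_Ioo
    rw [hmu] at hαp_mu
    exact hαp_mu
  -- norm bound
  have hX0 : 0 ≤ ∫ s, ‖f s‖ ^ p ∂mu01 :=
    integral_nonneg (fun s => Real.rpow_nonneg (norm_nonneg _) p)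
  have hXle1 : (∫ s, ‖f s‖ ^ p ∂mu01) ≤ 1 := by
    have e4 := hmemf.eLpNorm_eq_integral_rpow_norm hpne0 ENNReal.ofReal_ne_top
    have e5 : ‖f‖ = (∫ s, ‖f s‖ ^ p ∂mu01) ^ p⁻¹ := by
      rw [Lp.norm_def, e4, ENNReal.toReal_ofReal]
      · rw [ENNReal.toReal_ofReal hp0.le]
      · rw [ENNReal.toReal_ofReal hp0.le]
        exact Real.rpow_nonneg hX0 _
    have e6 : (∫ s, ‖f s‖ ^ p ∂mu01) ^ p⁻¹ ≤ 1 := by rw [← e5]; exact hfnorm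
    by_contra hgt
    push_neg at hgt
    have h7 : 1 < (∫ s, ‖f s‖ ^ p ∂mu01) ^ p⁻¹ :=
      (Real.one_lt_rpow_iff hX0).2 (Or.inl ⟨hgt, inv_pos.2 hp0⟩)
    linarith
  have hQ1 : (∫ s in (0:ℝ)..1, α s ^ p) ≤ 1 := by
    have e1 : (∫ s in (0:ℝ)..1, α s ^ p) = ∫ s, α s ^ p ∂mu01 := by
      rw [intervalIntegral.integral_of_le zero_le_one, hmu,
        ← MeasureTheory.Measure.restrict_congr_set Ioo_ae_eq_Ioc]
    have e2 : (∫ s, α s ^ p ∂mu01) = ∫ s, ‖f s‖ ^ p ∂mu01 := by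
      apply MeasureTheory.integral_congr_ae
      filter_upwards [haefμ, hf0] with s hs hfs
      rw [hs, Real.norm_eq_abs, abs_of_nonneg hfs]
    rw [e1, e2]
    exact hXle1
  -- constraint
  have hcon : ∀ h, h ∈ Ioc (0:ℝ) 1 →
      (∫ s in (0:ℝ)..h, α s ^ p) ≤ A * h ^ (1-p) * (∫ s in (0:ℝ)..h, α s) ^ p := by
    intro h hh
    have h0 : (0:ℝ) < h := hh.1
    have hc := hfcon h hh
    rw [hint_eq h h0.le hh.2, hintp_eq h h0.le hh.2] at hc
    have hy0 : 0 ≤ ∫ s in (0:ℝ)..h, α s :=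
      intervalIntegral.integral_nonneg h0.le (fun s _ => hα0 s)
    rw [Real.mul_rpow (by positivity) hy0] at hc
    have hmul := mul_le_mul_of_nonneg_left hc h0.le
    have lhs_eq : h * ((1/h) * ∫ s in (0:ℝ)..h, α s ^ p) = ∫ s in (0:ℝ)..h, α s ^ p := by
      field_simp
    have rhs_eq : h * (A * ((1/h) ^ p * (∫ s in (0:ℝ)..h, α s) ^ p))
        = A * h ^ (1-p) * (∫ s in (0:ℝ)..h, α s) ^ p := by
      rw [one_div, Real.inv_rpow h0.le, Real.rpow_sub h0, Real.rpow_one]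
      field_simp
    rw [lhs_eq, rhs_eq] at hmul
    exact hmul
  -- conclude via the core lemma
  rw [hint_eq τ hτ.1 hτ.2]
  exact core A p γ hA hp hγpos hγ1 hb hroot α hαm hα0 hsupp hαp_int hQ1 hcon τ hτpos hτ.2
end
end
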